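/- arXiv:2009.13970 — 7 statements merged into one kernel-verified Lean document; each statement's English description precedes it below -/
import Mathlib

section
/- Let G be a finite p-group with γ₂(G)^p γ₄(G) = 1, and let S = G ⋊ A where A is an abelian group acting on G with [G,A] ⊆ γ₃(G) and [A, γ₂(G)] = 1. Then γ₂(S) = γ₂(G). -/
open scoped commutatorElement

/-- If `G` is a finite `p`-group with `γ₂(G)^p γ₄(G) = 1` and `S = G ⋊ A` with `A` abelian,
`[G,A] ⊆ γ₃(G)` and `[A, γ₂(G)] = 1`, then `γ₂(S) = γ₂(G)`. -/
theorem gamma2_semidirect (p : ℕ) [Fact p.Prime] (G : Type*) [Group G] [Fintype G]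
    (hG : IsPGroup p G) (A : Type*) [CommGroup A] (φ : A →* MulAut G)
    (hexp : ∀ x ∈ (⊤ : Subgroup G).lowerCentralSeries 1, x ^ p = 1)
    (hγ4 : (⊤ : Subgroup G).lowerCentralSeries 3 = ⊥)
    (hGA : ⁅(SemidirectProduct.inl : G →* G ⋊[φ] A).range,
        (SemidirectProduct.inr : A →* G ⋊[φ] A).range⁆
      ≤ ((⊤ : Subgroup G).lowerCentralSeries 2).map (SemidirectProduct.inl : G →* G ⋊[φ] A))
    (hAγ2 : ⁅(SemidirectProduct.inr : A →* G ⋊[φ] A).range,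
        ((⊤ : Subgroup G).lowerCentralSeries 1).map (SemidirectProduct.inl : G →* G ⋊[φ] A)⁆ = ⊥) :
    (⊤ : Subgroup (G ⋊[φ] A)).lowerCentralSeries 1
      = ((⊤ : Subgroup G).lowerCentralSeries 1).map (SemidirectProduct.inl : G →* G ⋊[φ] A) := by
  have key : ∀ (g : G) (a : A), ∃ e ∈ (⊤ : Subgroup G).lowerCentralSeries 2, φ a g = e⁻¹ * g := by
    intro g a
    have h1 : ⁅(SemidirectProduct.inl g : G ⋊[φ] A), SemidirectProduct.inr a⁆ ∈
        ((⊤ : Subgroup G).lowerCentralSeries 2).map (SemidirectProduct.inl : G →* G ⋊[φ] A) :=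
      hGA (Subgroup.commutator_mem_commutator ⟨g, rfl⟩ ⟨a, rfl⟩)
    obtain ⟨y, hy, hy2⟩ := h1
    refine ⟨y, hy, ?_⟩
    have hc : (⁅(SemidirectProduct.inl g : G ⋊[φ] A), (SemidirectProduct.inr a : G ⋊[φ] A)⁆) =
        SemidirectProduct.inl (g * φ a g⁻¹) := by
      ext <;> simp [commutatorElement_def]
    have := SemidirectProduct.inl_injective (hy2.trans hc)
    have : y = g * φ a g⁻¹ := this
    rw [this, map_inv]
    group
  apply le_antisymm
  · have : (⊤ : Subgroup (G ⋊[φ] A)).lowerCentralSeries 1 = ⁅(⊤ : Subgroup (G ⋊[φ] A)), ⊤⁆ := by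
      rw [Subgroup.top_lowerCentralSeries_one, commutator_def]
    rw [this, Subgroup.commutator_le]
    intro s _ t _
    obtain ⟨g, a⟩ := s
    obtain ⟨h, b⟩ := t
    obtain ⟨e, he, hea⟩ := key h a
    obtain ⟨f, hf, hfb⟩ := key g⁻¹ b
    have hx : ⁅(⟨g, a⟩ : G ⋊[φ] A), (⟨h, b⟩ : G ⋊[φ] A)⁆ =
        SemidirectProduct.inl (g * φ a h * φ b g⁻¹ * h⁻¹) := by
      ext
      · have hcomp : ∀ (c d : A) (x : G), φ c (φ d x) = φ (c * d) x := by
          intro c d x; rw [map_mul]; rfl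
        have hinv : ∀ (c : A) (x : G), (φ c)⁻¹ x = φ c⁻¹ x := by
          intro c x; rw [map_inv]
        simp only [commutatorElement_def, SemidirectProduct.mul_left,
          SemidirectProduct.mul_right, SemidirectProduct.inv_left,
          SemidirectProduct.inv_right, map_mul, hcomp, hinv, map_inv]
        have h1 : a * b * (a * b)⁻¹ = 1 := by group
        have h2 : a * b * ((a * b)⁻¹ * b) = b := by group
        have h3 : a * (b * a⁻¹) = b := by
          rw [mul_comm b a⁻¹]; group
        have h4 : a * (b * a⁻¹ * b⁻¹) = 1 := by
          rw [mul_comm b a⁻¹]; group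
        simp only [MulAut.mul_apply, SemidirectProduct.left_inl, SemidirectProduct.right_inl,
          hcomp, hinv, map_one, MulAut.one_apply, h3, h4, map_inv]
        simp only [inv_one, MulAut.one_apply]
      · simp [commutatorElement_def, mul_comm a b]
    rw [hx]
    refine ⟨g * φ a h * φ b g⁻¹ * h⁻¹, ?_, rfl⟩
    rw [hea, hfb]
    have hmem : g * (e⁻¹ * h) * (f⁻¹ * g⁻¹) * h⁻¹ =
        (g * e⁻¹ * g⁻¹) * ((g * h) * f⁻¹ * (g * h)⁻¹) * ⁅g, h⁆ := by
      simp [commutatorElement_def]; group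
    rw [hmem]
    have h2le : (⊤ : Subgroup G).lowerCentralSeries 2 ≤ (⊤ : Subgroup G).lowerCentralSeries 1 :=
      Subgroup.lowerCentralSeries_antitone ⊤ (by norm_num)
    have hN := Subgroup.lowerCentralSeries_normal (⊤ : Subgroup G) 1
    refine mul_mem (mul_mem ?_ ?_) ?_
    · exact hN.conj_mem _ (inv_mem (h2le he)) g
    · exact hN.conj_mem _ (inv_mem (h2le hf)) (g * h)
    · rw [Subgroup.top_lowerCentralSeries_one, commutator_def]
      exact Subgroup.commutator_mem_commutator trivial trivial
  · exact Subgroup.lowerCentralSeries.map _ 1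
end

section
/- Let G be a finite p-group of class at most 3 with γ₂(G) elementary abelian, and S = G ⋊ A with A abelian, [G,A] ⊆ γ₃(G) and [A, γ₂(G)] = 1. Then Z(S) ∩ γ₂(S) = Z(G) ∩ γ₂(G). -/
open Subgroup SemidirectProduct
open scoped commutatorElement

section
variable {G : Type*} [Group G] {A : Type*} [CommGroup A] (φ : A →* MulAut G)

private lemma comm_inl_inr' (x : G) (b : A) :
    ⁅(inl : G →* G ⋊[φ] A) x, (inr : A →* G ⋊[φ] A) b⁆
      = (inl : G →* G ⋊[φ] A) (x * φ b x⁻¹) := by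
  ext <;> simp [commutatorElement_def]

private lemma comm_inr_inl' (b : A) (x : G) :
    ⁅(inr : A →* G ⋊[φ] A) b, (inl : G →* G ⋊[φ] A) x⁆
      = (inl : G →* G ⋊[φ] A) (φ b x * x⁻¹) := by
  ext <;> simp [commutatorElement_def]

private lemma comm_general' (s t : G ⋊[φ] A) :
    ⁅s, t⁆ = (inl : G →* G ⋊[φ] A)
      (s.left * φ s.right t.left * φ t.right s.left⁻¹ * t.left⁻¹) := by
  have key : ∀ (a b : A) (y : G), φ a (φ b y) = φ (a * b) y := fun a b y => by
    rw [map_mul]; rfl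
  have h : s.right * t.right * s.right⁻¹ = t.right := by
    rw [mul_comm s.right t.right]; group
  have h2 : s.right * t.right * s.right⁻¹ * t.right⁻¹ = 1 := by
    rw [mul_comm s.right t.right]; group
  ext
  · simp only [commutatorElement_def, mul_left, inv_left, mul_right, inv_right, left_inl]
    rw [key, key, h2, h, map_one]
    simp [mul_assoc]
  · simp [commutatorElement_def, mul_comm s.right t.right]

end

/-- If `G` is a finite `p`-group of class at most 3 with `γ₂(G)` elementary abelian and
`S = G ⋊ A` with `A` abelian, `[G,A] ⊆ γ₃(G)`, `[A, γ₂(G)] = 1`, then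
`Z(S) ∩ γ₂(S) = Z(G) ∩ γ₂(G)`. -/
theorem center_meet_gamma2_semidirect (p : ℕ) [Fact p.Prime] (G : Type*) [Group G] [Fintype G]
    (hG : IsPGroup p G) (A : Type*) [CommGroup A] (φ : A →* MulAut G)
    (hclass : (⊤ : Subgroup G).lowerCentralSeries 3 = ⊥)
    (hexp : ∀ x ∈ (⊤ : Subgroup G).lowerCentralSeries 1, x ^ p = 1)
    (habel : ∀ x ∈ (⊤ : Subgroup G).lowerCentralSeries 1, ∀ y ∈ (⊤ : Subgroup G).lowerCentralSeries 1, x * y = y * x)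
    (hGA : ⁅(SemidirectProduct.inl : G →* G ⋊[φ] A).range,
        (SemidirectProduct.inr : A →* G ⋊[φ] A).range⁆
      ≤ ((⊤ : Subgroup G).lowerCentralSeries 2).map (SemidirectProduct.inl : G →* G ⋊[φ] A))
    (hAγ2 : ⁅(SemidirectProduct.inr : A →* G ⋊[φ] A).range,
        ((⊤ : Subgroup G).lowerCentralSeries 1).map (SemidirectProduct.inl : G →* G ⋊[φ] A)⁆ = ⊥) :
    Subgroup.center (G ⋊[φ] A) ⊓ (⊤ : Subgroup (G ⋊[φ] A)).lowerCentralSeries 1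
      = (Subgroup.center G ⊓ (⊤ : Subgroup G).lowerCentralSeries 1).map
          (SemidirectProduct.inl : G →* G ⋊[φ] A) := by
  have hGA' : ∀ (x : G) (b : A), x * φ b x⁻¹ ∈ (⊤ : Subgroup G).lowerCentralSeries 1 := by
    intro x b
    have h := hGA (commutator_mem_commutator ⟨x, rfl⟩ ⟨b, rfl⟩)
    rw [comm_inl_inr'] at h
    obtain ⟨y, hy, hxy⟩ := Subgroup.mem_map.mp h
    rw [← inl_injective hxy]
    exact Subgroup.lowerCentralSeries_antitone _ (by norm_num) hy
  have hfix : ∀ (b : A) (x : G), x ∈ (⊤ : Subgroup G).lowerCentralSeries 1 → φ b x = x := by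
    intro b x hx
    have h : ⁅(inr : A →* G ⋊[φ] A) b, (inl : G →* G ⋊[φ] A) x⁆
        ∈ (⊥ : Subgroup (G ⋊[φ] A)) := by
      rw [← hAγ2]
      exact commutator_mem_commutator ⟨b, rfl⟩ (Subgroup.mem_map.mpr ⟨x, hx, rfl⟩)
    rw [Subgroup.mem_bot, comm_inr_inl'] at h
    have h1 : φ b x * x⁻¹ = 1 := by
      have := congrArg SemidirectProduct.left h; simpa using this
    exact mul_inv_eq_one.mp h1
  have hnorm : ((⊤ : Subgroup G).lowerCentralSeries 1).Normal := Subgroup.lowerCentralSeries_normal ⊤ 1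
  have hsub : (⊤ : Subgroup (G ⋊[φ] A)).lowerCentralSeries 1
      ≤ ((⊤ : Subgroup G).lowerCentralSeries 1).map (inl : G →* G ⋊[φ] A) := by
    rw [Subgroup.top_lowerCentralSeries_one, commutator_def]
    refine commutator_le.mpr fun s _ t _ => ?_
    rw [comm_general']
    refine Subgroup.mem_map.mpr
      ⟨s.left * φ s.right t.left * φ t.right s.left⁻¹ * t.left⁻¹, ?_, rfl⟩
    have hu : φ s.right t.left * t.left⁻¹ ∈ (⊤ : Subgroup G).lowerCentralSeries 1 := by
      have := inv_mem (hGA' t.left s.right); simpa using this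
    have hv : φ t.right s.left⁻¹ * s.left ∈ (⊤ : Subgroup G).lowerCentralSeries 1 := by
      have := inv_mem (hGA' s.left⁻¹ t.right); simpa using this
    have hc : s.left * t.left * s.left⁻¹ * t.left⁻¹ ∈ (⊤ : Subgroup G).lowerCentralSeries 1 := by
      rw [Subgroup.top_lowerCentralSeries_one, commutator_def]
      exact commutator_mem_commutator (Subgroup.mem_top _) (Subgroup.mem_top _)
    have e : s.left * φ s.right t.left * φ t.right s.left⁻¹ * t.left⁻¹
        = (s.left * (φ s.right t.left * t.left⁻¹) * s.left⁻¹)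
          * ((s.left * t.left) * (φ t.right s.left⁻¹ * s.left) * (s.left * t.left)⁻¹)
          * (s.left * t.left * s.left⁻¹ * t.left⁻¹) := by group
    rw [e]
    exact mul_mem (mul_mem (hnorm.conj_mem _ hu _) (hnorm.conj_mem _ hv _)) hc
  have hsup : ((⊤ : Subgroup G).lowerCentralSeries 1).map (inl : G →* G ⋊[φ] A)
      ≤ (⊤ : Subgroup (G ⋊[φ] A)).lowerCentralSeries 1 := by
    rw [Subgroup.top_lowerCentralSeries_one, Subgroup.top_lowerCentralSeries_one, commutator_def, commutator_def,
      Subgroup.map_commutator]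
    exact commutator_mono le_top le_top
  apply le_antisymm
  · intro s hs
    rw [Subgroup.mem_inf] at hs
    obtain ⟨hz, hγ⟩ := hs
    obtain ⟨x, hxN, rfl⟩ := Subgroup.mem_map.mp (hsub hγ)
    refine Subgroup.mem_map.mpr ⟨x, Subgroup.mem_inf.mpr ⟨?_, hxN⟩, rfl⟩
    rw [Subgroup.mem_center_iff]
    intro g
    have h := (Subgroup.mem_center_iff.mp hz) (inl g)
    rw [← map_mul, ← map_mul] at h
    exact inl_injective h
  · intro s hs
    obtain ⟨x, hx, rfl⟩ := Subgroup.mem_map.mp hs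
    obtain ⟨hxc, hxN⟩ := Subgroup.mem_inf.mp hx
    refine Subgroup.mem_inf.mpr ⟨?_, hsup (Subgroup.mem_map.mpr ⟨x, hxN, rfl⟩)⟩
    rw [Subgroup.mem_center_iff]
    intro t
    ext
    · simp [hfix t.right x hxN, Subgroup.mem_center_iff.mp hxc t.left]
    · simp
end

section
/- Let G be a finite p-group of class at most 3 with γ₂(G)^p γ₄(G) = 1, and S = G ⋊ A with A abelian, [G,A] ⊆ γ₃(G), [A, γ₂(G)] = 1. Then γ₄(S) = 1, i.e. S has nilpotency class at most 3. -/
open Subgroup SemidirectProduct commutatorElement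

/-- If `N` is normal and both `⁅H₁, K⁆` and `⁅H₂, K⁆` lie in `N`,
then `⁅H₁ ⊔ H₂, K⁆ ≤ N`. -/
theorem aux_commutator_sup_le {G : Type*} [Group G] {H₁ H₂ K N : Subgroup G}
    [hN : N.Normal] (h₁ : ⁅H₁, K⁆ ≤ N) (h₂ : ⁅H₂, K⁆ ≤ N) : ⁅H₁ ⊔ H₂, K⁆ ≤ N := by
  rw [Subgroup.commutator_le] at h₁ h₂ ⊢
  let T : Subgroup G :=
    { carrier := { g | ∀ k ∈ K, ⁅g, k⁆ ∈ N }
      one_mem' := by intro k hk; simpa using N.one_mem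
      mul_mem' := by
        intro a b ha hb k hk
        have key : ⁅a * b, k⁆ = a * ⁅b, k⁆ * a⁻¹ * ⁅a, k⁆ := by
          simp only [commutatorElement_def]; group
        rw [key]
        exact N.mul_mem (hN.conj_mem _ (hb k hk) a) (ha k hk)
      inv_mem' := by
        intro a ha k hk
        have key : ⁅a⁻¹, k⁆ = a⁻¹ * ⁅a, k⁆⁻¹ * a⁻¹⁻¹ := by
          simp only [commutatorElement_def]; group
        rw [key]
        exact hN.conj_mem _ (N.inv_mem (ha k hk)) a⁻¹ }
  have hT : H₁ ⊔ H₂ ≤ T := sup_le (fun g hg k hk => h₁ g hg k hk)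
    (fun g hg k hk => h₂ g hg k hk)
  exact fun g hg k hk => hT hg k hk

theorem aux_commutator_le_sup {G : Type*} [Group G] {H₁ H₂ K N : Subgroup G}
    [N.Normal] (h₁ : ⁅K, H₁⁆ ≤ N) (h₂ : ⁅K, H₂⁆ ≤ N) : ⁅K, H₁ ⊔ H₂⁆ ≤ N := by
  rw [Subgroup.commutator_comm] at h₁ h₂ ⊢
  exact aux_commutator_sup_le h₁ h₂

/-- If `G` is a finite `p`-group of class at most 3 with `γ₂(G)^p γ₄(G) = 1` and
`S = G ⋊ A` with `A` abelian, `[G,A] ⊆ γ₃(G)`, `[A, γ₂(G)] = 1`, then `γ₄(S) = 1`,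
i.e. `S` has nilpotency class at most 3. -/
theorem gamma4_semidirect (p : ℕ) [Fact p.Prime] (G : Type*) [Group G] [Fintype G]
    (hG : IsPGroup p G) (A : Type*) [CommGroup A] (φ : A →* MulAut G)
    (hexp : ∀ x ∈ Subgroup.lowerCentralSeries (⊤ : Subgroup G) 1, x ^ p = 1)
    (hγ4 : Subgroup.lowerCentralSeries (⊤ : Subgroup G) 3 = ⊥)
    (hGA : ⁅(SemidirectProduct.inl : G →* G ⋊[φ] A).range,
        (SemidirectProduct.inr : A →* G ⋊[φ] A).range⁆
      ≤ (Subgroup.lowerCentralSeries (⊤ : Subgroup G) 2).map (SemidirectProduct.inl : G →* G ⋊[φ] A))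
    (hAγ2 : ⁅(SemidirectProduct.inr : A →* G ⋊[φ] A).range,
        (Subgroup.lowerCentralSeries (⊤ : Subgroup G) 1).map (SemidirectProduct.inl : G →* G ⋊[φ] A)⁆ = ⊥) :
    Subgroup.lowerCentralSeries (⊤ : Subgroup (G ⋊[φ] A)) 3 = ⊥ := by
  set H : Subgroup (G ⋊[φ] A) := (inl : G →* G ⋊[φ] A).range with hH
  set K : Subgroup (G ⋊[φ] A) := (inr : A →* G ⋊[φ] A).range with hK
  set N : ℕ → Subgroup (G ⋊[φ] A) := fun n => (Subgroup.lowerCentralSeries (⊤ : Subgroup G) n).map (inl : G →* G ⋊[φ] A) with hNdef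
  -- N n is normal in S
  have hNorm : ∀ n, (N n).Normal := by
    intro n
    constructor
    rintro _ ⟨x, hx, rfl⟩ t
    have key : t * inl x * t⁻¹ = inl (t.left * φ t.right x * t.left⁻¹) := by
      ext <;> simp [SemidirectProduct.mul_left, SemidirectProduct.mul_right,
        SemidirectProduct.inv_left, SemidirectProduct.inv_right, mul_assoc]
    rw [key]
    refine ⟨t.left * φ t.right x * t.left⁻¹, ?_, rfl⟩
    have hφ : φ t.right x ∈ Subgroup.lowerCentralSeries (⊤ : Subgroup G) n :=
      lowerCentralSeries.map (φ t.right).toMonoidHom n ⟨x, hx, rfl⟩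
    exact Subgroup.Normal.conj_mem (lowerCentralSeries_normal ⊤ n) _ hφ t.left
  haveI := hNorm 1
  haveI := hNorm 2
  -- ⊤ = H ⊔ K
  have htop : H ⊔ K = (⊤ : Subgroup (G ⋊[φ] A)) := by
    rw [eq_top_iff]
    intro s _
    rw [← inl_left_mul_inr_right s]
    exact mul_mem (le_sup_left (α := Subgroup (G ⋊[φ] A)) ⟨s.left, rfl⟩)
      (le_sup_right (α := Subgroup (G ⋊[φ] A)) ⟨s.right, rfl⟩)
  -- H as image of ⊤
  have hHmap : H = (⊤ : Subgroup G).map (inl : G →* G ⋊[φ] A) := by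
    rw [← MonoidHom.range_eq_map]
  -- basic commutator bounds
  have hHH : ∀ n, ⁅N n, H⁆ = N (n + 1) := by
    intro n
    rw [hHmap, hNdef]
    simp only
    rw [← Subgroup.map_commutator]
    rfl
  have hantitone : ∀ {m n : ℕ}, m ≤ n → N n ≤ N m := fun h =>
    Subgroup.map_mono (Subgroup.lowerCentralSeries_antitone (S := (⊤ : Subgroup G)) h)
  have hNK : ∀ n, 1 ≤ n → ⁅N n, K⁆ ≤ ⊥ := by
    intro n hn
    calc ⁅N n, K⁆ ≤ ⁅N 1, K⁆ := Subgroup.commutator_mono (hantitone hn) le_rfl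
      _ = ⁅K, N 1⁆ := Subgroup.commutator_comm _ _
      _ = ⊥ := hAγ2
  have hKK : ⁅K, K⁆ ≤ (⊥ : Subgroup (G ⋊[φ] A)) := by
    rw [Subgroup.commutator_le]
    rintro _ ⟨a, rfl⟩ _ ⟨b, rfl⟩
    have : ⁅(inr a : G ⋊[φ] A), (inr b : G ⋊[φ] A)⁆ = 1 := by
      rw [← map_commutatorElement, commutatorElement_eq_one_iff_mul_comm.mpr (mul_comm a b),
        map_one]
    rw [this]
    exact Subgroup.one_mem ⊥
  -- step 1 : γ₂(S) ≤ N 1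
  have h1 : Subgroup.lowerCentralSeries (⊤ : Subgroup (G ⋊[φ] A)) 1 ≤ N 1 := by
    have hHtop : ⁅H ⊔ K, H⁆ ≤ N 1 := by
      refine aux_commutator_sup_le ?_ ?_
      · have hN0 : N 0 = H := by
          rw [hNdef, hHmap]
          exact rfl
        have := hHH 0
        rw [hN0] at this
        exact this.le
      · calc ⁅K, H⁆ = ⁅H, K⁆ := Subgroup.commutator_comm _ _
          _ ≤ N 2 := hGA
          _ ≤ N 1 := hantitone (by norm_num)
    have hKtop : ⁅H ⊔ K, K⁆ ≤ N 1 := by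
      refine aux_commutator_sup_le ?_ ?_
      · exact hGA.trans (hantitone (by norm_num))
      · exact hKK.trans bot_le
    calc Subgroup.lowerCentralSeries (⊤ : Subgroup (G ⋊[φ] A)) 1 = ⁅(⊤ : Subgroup (G ⋊[φ] A)), ⊤⁆ := rfl
      _ = ⁅H ⊔ K, H ⊔ K⁆ := by rw [htop]
      _ ≤ N 1 := aux_commutator_le_sup hHtop hKtop
  -- step 2 : γ₃(S) ≤ N 2
  have h2 : Subgroup.lowerCentralSeries (⊤ : Subgroup (G ⋊[φ] A)) 2 ≤ N 2 := by
    calc Subgroup.lowerCentralSeries (⊤ : Subgroup (G ⋊[φ] A)) 2 = ⁅Subgroup.lowerCentralSeries (⊤ : Subgroup (G ⋊[φ] A)) 1, ⊤⁆ := rfl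
      _ ≤ ⁅N 1, H ⊔ K⁆ := Subgroup.commutator_mono h1 htop.ge
      _ ≤ N 2 := by
          refine aux_commutator_le_sup ?_ ?_
          · exact (hHH 1).le
          · exact (hNK 1 le_rfl).trans bot_le
  -- step 3 : γ₄(S) = ⊥
  have h3 : Subgroup.lowerCentralSeries (⊤ : Subgroup (G ⋊[φ] A)) 3 ≤ (⊥ : Subgroup (G ⋊[φ] A)) := by
    calc Subgroup.lowerCentralSeries (⊤ : Subgroup (G ⋊[φ] A)) 3 = ⁅Subgroup.lowerCentralSeries (⊤ : Subgroup (G ⋊[φ] A)) 2, ⊤⁆ := rfl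
      _ ≤ ⁅N 2, H ⊔ K⁆ := Subgroup.commutator_mono h2 htop.ge
      _ ≤ ⊥ := by
          refine aux_commutator_le_sup ?_ ?_
          · rw [hHH 2]
            simp only [hNdef, hγ4]
            rw [Subgroup.map_bot]
          · exact hNK 2 (by norm_num)
  exact le_bot_iff.mp h3
end

section
/- Let G be a finite p-group of class at most 3 with γ₂(G) elementary abelian, and S = G ⋊ A with A abelian, [G,A] ⊆ γ₃(G), [A, γ₂(G)] = 1, and [Z₂(G), A] = 1. Then Z₂(S) = Z₂(G) × A (an internal direct product) and Z₂(S) ∩ G = Z₂(G). -/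
open SemidirectProduct Subgroup
open scoped commutatorElement

/-- If `G` is a finite `p`-group of class at most 3 with `γ₂(G)` elementary abelian and
`S = G ⋊ A` with `A` abelian, `[G,A] ⊆ γ₃(G)`, `[A, γ₂(G)] = 1` and `[Z₂(G), A] = 1`,
then `Z₂(S) = Z₂(G) × A` (internal direct product) and `Z₂(S) ∩ G = Z₂(G)`. -/
theorem secondCenter_semidirect (p : ℕ) [Fact p.Prime] (G : Type*) [Group G] [Fintype G]
    (hG : IsPGroup p G) (A : Type*) [CommGroup A] (φ : A →* MulAut G)
    (hclass : (⊤ : Subgroup G).lowerCentralSeries 3 = ⊥)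
    (hexp : ∀ x ∈ (⊤ : Subgroup G).lowerCentralSeries 1, x ^ p = 1)
    (habel : ∀ x ∈ (⊤ : Subgroup G).lowerCentralSeries 1, ∀ y ∈ (⊤ : Subgroup G).lowerCentralSeries 1, x * y = y * x)
    (hGA : ⁅(SemidirectProduct.inl : G →* G ⋊[φ] A).range,
        (SemidirectProduct.inr : A →* G ⋊[φ] A).range⁆
      ≤ ((⊤ : Subgroup G).lowerCentralSeries 2).map (SemidirectProduct.inl : G →* G ⋊[φ] A))
    (hAγ2 : ⁅(SemidirectProduct.inr : A →* G ⋊[φ] A).range,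
        ((⊤ : Subgroup G).lowerCentralSeries 1).map (SemidirectProduct.inl : G →* G ⋊[φ] A)⁆ = ⊥)
    (hZ2A : ⁅(Subgroup.upperCentralSeries G 2).map (SemidirectProduct.inl : G →* G ⋊[φ] A),
        (SemidirectProduct.inr : A →* G ⋊[φ] A).range⁆ = ⊥) :
    Subgroup.upperCentralSeries (G ⋊[φ] A) 2
        = (Subgroup.upperCentralSeries G 2).map (SemidirectProduct.inl : G →* G ⋊[φ] A)
            ⊔ (SemidirectProduct.inr : A →* G ⋊[φ] A).range
      ∧ (Subgroup.upperCentralSeries G 2).map (SemidirectProduct.inl : G →* G ⋊[φ] A)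
            ⊓ (SemidirectProduct.inr : A →* G ⋊[φ] A).range = ⊥
      ∧ Subgroup.upperCentralSeries (G ⋊[φ] A) 2 ⊓ (SemidirectProduct.inl : G →* G ⋊[φ] A).range
          = (Subgroup.upperCentralSeries G 2).map (SemidirectProduct.inl : G →* G ⋊[φ] A) := by
  -- `φ` fixes every element of `γ₂(G)`
  have hfix2 : ∀ (a : A) (x : G), x ∈ (⊤ : Subgroup G).lowerCentralSeries 1 → φ a x = x := by
    intro a x hx
    have h : ⁅(inr a : G ⋊[φ] A), (inl x : G ⋊[φ] A)⁆ = 1 := by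
      have := commutator_mem_commutator (H₁ := (inr : A →* G ⋊[φ] A).range)
        (H₂ := ((⊤ : Subgroup G).lowerCentralSeries 1).map (inl : G →* G ⋊[φ] A))
        ⟨a, rfl⟩ (mem_map_of_mem inl hx)
      rwa [hAγ2, mem_bot] at this
    have h2 := congrArg SemidirectProduct.left (commutatorElement_eq_one_iff_mul_comm.mp h)
    simpa using h2
  -- `φ` fixes every element of `Z₂(G)`
  have hfixZ2 : ∀ (a : A) (z : G), z ∈ Subgroup.upperCentralSeries G 2 → φ a z = z := by
    intro a z hz
    have h : ⁅(inl z : G ⋊[φ] A), (inr a : G ⋊[φ] A)⁆ = 1 := by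
      have := commutator_mem_commutator
        (H₁ := (Subgroup.upperCentralSeries G 2).map (inl : G →* G ⋊[φ] A))
        (H₂ := (inr : A →* G ⋊[φ] A).range)
        (mem_map_of_mem inl hz) ⟨a, rfl⟩
      rwa [hZ2A, mem_bot] at this
    have h2 := congrArg SemidirectProduct.left (commutatorElement_eq_one_iff_mul_comm.mp h)
    simpa using h2.symm
  -- `γ₃(G)` is central
  have hγ3c : ∀ x ∈ (⊤ : Subgroup G).lowerCentralSeries 2, x ∈ center G := by
    intro x hx
    rw [mem_center_iff]
    intro y
    have h : ⁅x, y⁆ ∈ (⊤ : Subgroup G).lowerCentralSeries 3 := by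
      rw [Subgroup.lowerCentralSeries_succ]
      exact commutator_mem_commutator hx (mem_top y)
    rw [hclass, mem_bot] at h
    exact (commutatorElement_eq_one_iff_mul_comm.mp h).symm
  have hγ3fix : ∀ (a : A), ∀ x ∈ (⊤ : Subgroup G).lowerCentralSeries 2, φ a x = x := fun a x hx =>
    hfix2 a x (Subgroup.lowerCentralSeries_antitone ⊤ (by norm_num) hx)
  have hZ1fix : ∀ (a : A), ∀ c ∈ center G, φ a c = c := fun a c hc =>
    hfixZ2 a c (Subgroup.upperCentralSeries_mono G (by norm_num)
      ((Subgroup.upperCentralSeries_one G).symm ▸ hc))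
  -- the action of `A` moves elements by central elements of `γ₃(G)`
  have hact : ∀ (a : A) (g : G), φ a g * g⁻¹ ∈ (⊤ : Subgroup G).lowerCentralSeries 2 := by
    intro a g
    have hmem := hGA (commutator_mem_commutator
      (H₁ := (inl : G →* G ⋊[φ] A).range) (H₂ := (inr : A →* G ⋊[φ] A).range)
      ⟨g, rfl⟩ ⟨a, rfl⟩)
    obtain ⟨c, hc, hceq⟩ := hmem
    have key : (⁅(inl g : G ⋊[φ] A), (inr a : G ⋊[φ] A)⁆) = inl (g * (φ a g)⁻¹) := by
      rw [commutatorElement_def]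
      ext <;> simp
    rw [key, inl_inj] at hceq
    have : (g * (φ a g)⁻¹)⁻¹ ∈ (⊤ : Subgroup G).lowerCentralSeries 2 := inv_mem (hceq ▸ hc)
    simpa [mul_inv_rev] using this
  -- central, `φ`-fixed elements of `G` give central elements of `S`
  have central_inl : ∀ c : G, c ∈ center G → (∀ b : A, φ b c = c) →
      (inl c : G ⋊[φ] A) ∈ center (G ⋊[φ] A) := by
    intro c hc hfix
    rw [mem_center_iff]
    intro y
    refine SemidirectProduct.ext ?_ ?_
    · simp [hfix y.right, mem_center_iff.mp hc y.left]
    · simp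
  -- every `inr a` lies in `Z₂(S)`
  have inr_mem : ∀ a : A, (inr a : G ⋊[φ] A) ∈ Subgroup.upperCentralSeries (G ⋊[φ] A) 2 := by
    intro a
    rw [Subgroup.mem_upperCentralSeries_succ_iff]
    intro y
    have key : (inr a : G ⋊[φ] A) * y * (inr a)⁻¹ * y⁻¹ = inl (φ a y.left * y.left⁻¹) := by
      refine SemidirectProduct.ext ?_ ?_
      · simp only [mul_left, mul_right, inv_left, inv_right, left_inr, right_inr,
          inv_left, map_one, mul_one, one_mul, left_inl, right_inl,
          ← map_inv, ← map_mul, ← MulAut.mul_apply]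
        rw [show a * y.right * a⁻¹ * y.right⁻¹ = (1 : A) by
          rw [mul_comm a y.right]; group]
        simp
      · simp [mul_comm, mul_left_comm]
    rw [commutatorElement_def, key, Subgroup.upperCentralSeries_one]
    have hmem := hact a y.left
    exact central_inl _ (hγ3c _ hmem) (fun b => hγ3fix b _ hmem)
  -- every `inl z` with `z ∈ Z₂(G)` lies in `Z₂(S)`
  have inlZ2_mem : ∀ z ∈ Subgroup.upperCentralSeries G 2,
      (inl z : G ⋊[φ] A) ∈ Subgroup.upperCentralSeries (G ⋊[φ] A) 2 := by
    intro z hz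
    rw [Subgroup.mem_upperCentralSeries_succ_iff]
    intro y
    have h1 : φ y.right z = z := hfixZ2 y.right z hz
    have key : (inl z : G ⋊[φ] A) * y * (inl z)⁻¹ * y⁻¹
        = inl (z * y.left * z⁻¹ * y.left⁻¹) := by
      refine SemidirectProduct.ext ?_ ?_
      · simp [map_inv, h1, mul_assoc]
      · simp
    rw [commutatorElement_def, key, Subgroup.upperCentralSeries_one]
    have hcen : z * y.left * z⁻¹ * y.left⁻¹ ∈ center G := by
      have := Subgroup.mem_upperCentralSeries_succ_iff.mp hz y.left
      rwa [Subgroup.upperCentralSeries_one, commutatorElement_def] at this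
    exact central_inl _ hcen (fun b => hZ1fix b _ hcen)
  -- projection: if `inl g ∈ Z₂(S)` then `g ∈ Z₂(G)`
  have proj : ∀ g : G, (inl g : G ⋊[φ] A) ∈ Subgroup.upperCentralSeries (G ⋊[φ] A) 2 →
      g ∈ Subgroup.upperCentralSeries G 2 := by
    intro g hg
    rw [Subgroup.mem_upperCentralSeries_succ_iff]
    intro h
    have h1 : (inl (g * h * g⁻¹ * h⁻¹) : G ⋊[φ] A) ∈ Subgroup.upperCentralSeries (G ⋊[φ] A) 1 := by
      have := Subgroup.mem_upperCentralSeries_succ_iff.mp hg (inl h)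
      simpa [map_mul, map_inv, commutatorElement_def] using this
    rw [Subgroup.upperCentralSeries_one] at h1 ⊢
    rw [mem_center_iff] at h1 ⊢
    intro y
    have := h1 (inl y)
    rw [← map_mul, ← map_mul] at this
    exact inl_injective this
  refine ⟨?_, ?_, ?_⟩
  · apply le_antisymm
    · intro s hs
      have h1 : (inr s.right : G ⋊[φ] A) ∈ Subgroup.upperCentralSeries (G ⋊[φ] A) 2 := inr_mem s.right
      have h2 : (inl s.left : G ⋊[φ] A) ∈ Subgroup.upperCentralSeries (G ⋊[φ] A) 2 := by
        have heq : (inl s.left : G ⋊[φ] A) = s * (inr s.right)⁻¹ :=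
          eq_mul_inv_of_mul_eq (inl_left_mul_inr_right s)
        rw [heq]
        exact mul_mem hs (inv_mem h1)
      rw [← inl_left_mul_inr_right s]
      exact mul_mem (mem_sup_left (mem_map_of_mem inl (proj _ h2)))
        (mem_sup_right ⟨s.right, rfl⟩)
    · rw [sup_le_iff]
      constructor
      · intro x hx
        obtain ⟨z, hz, rfl⟩ := hx
        exact inlZ2_mem z hz
      · intro x hx
        obtain ⟨a, rfl⟩ := hx
        exact inr_mem a
  · rw [eq_bot_iff]
    intro x hx
    obtain ⟨⟨z, hz, rfl⟩, a, ha⟩ := hx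
    have ha1 : a = 1 := by
      have := congrArg SemidirectProduct.right ha
      simpa using this
    rw [mem_bot, ← ha, ha1, map_one]
  · apply le_antisymm
    · intro x hx
      obtain ⟨hx2, g, rfl⟩ := hx
      exact mem_map_of_mem inl (proj g hx2)
    · apply le_inf
      · intro x hx
        obtain ⟨z, hz, rfl⟩ := hx
        exact inlZ2_mem z hz
      · intro x hx
        obtain ⟨z, hz, rfl⟩ := hx
        exact ⟨z, rfl⟩
end

section
/- Let G be a finite p-group of nilpotency class 3 such that γ₂(G)/γ₃(G) is cyclic and γ₃(G) is elementary abelian. Then Z(G) ∩ γ₂(G) = γ₂(G)^p γ₃(G), and this subgroup has index p in γ₂(G). -/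
open scoped commutatorElement

private lemma aux_pow_comm {G : Type*} [Group G] {x g c : G}
    (hc : ∀ y : G, c * y = y * c) (h : x * g = c * (g * x)) (n : ℕ) :
    x ^ n * g = c ^ n * (g * x ^ n) := by
  have hcp : ∀ (y : G) (k : ℕ), c ^ k * y = y * c ^ k := fun y k =>
    (Commute.pow_left (hc y) k)
  induction n with
  | zero => simp
  | succ n ih =>
    calc x ^ (n + 1) * g = x * (x ^ n * g) := by rw [pow_succ', mul_assoc]
    _ = x * (c ^ n * (g * x ^ n)) := by rw [ih]
    _ = c ^ n * (x * (g * x ^ n)) := by rw [← mul_assoc, ← hcp x n, mul_assoc]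
    _ = c ^ n * (c * (g * x) * x ^ n) := by rw [← mul_assoc x, h]
    _ = c ^ (n + 1) * (g * x ^ (n + 1)) := by group

private lemma aux_comm_pow {G : Type*} [Group G] {x g : G}
    (hc : ∀ y : G, ⁅x, g⁆ * y = y * ⁅x, g⁆) (n : ℕ) :
    ⁅x ^ n, g⁆ = ⁅x, g⁆ ^ n := by
  have h : x * g = ⁅x, g⁆ * (g * x) := by
    simp only [commutatorElement_def]; group
  have h2 := aux_pow_comm hc h n
  simp only [commutatorElement_def]
  rw [show x ^ n * g * (x ^ n)⁻¹ * g⁻¹ = (x ^ n * g) * (x ^ n)⁻¹ * g⁻¹ from rfl, h2]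
  group

private lemma aux_comm_mul_central {G : Type*} [Group G] {x n g : G}
    (hn : ∀ y : G, n * y = y * n) : ⁅x * n, g⁆ = ⁅x, g⁆ := by
  simp only [commutatorElement_def]
  have h1 : x * n * g * (x * n)⁻¹ * g⁻¹ = x * (n * g * n⁻¹) * x⁻¹ * g⁻¹ := by group
  have h2 : n * g * n⁻¹ = g := by rw [hn g]; group
  rw [h1, h2]

/-- Let `G` be a finite `p`-group of class 3 such that `γ₂(G)/γ₃(G)` is cyclic and `γ₃(G)`
is elementary abelian. Then `Z(G) ∩ γ₂(G) = γ₂(G)^p γ₃(G)`, a subgroup of index `p` in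
`γ₂(G)`. -/
theorem center_meet_gamma2_eq (p : ℕ) [Fact p.Prime] (G : Type*) [Group G] [Fintype G]
    (hG : IsPGroup p G)
    (hclass : Subgroup.lowerCentralSeries (⊤ : Subgroup G) 2 ≠ ⊥ ∧ Subgroup.lowerCentralSeries (⊤ : Subgroup G) 3 = ⊥)
    (hcyc : IsCyclic
      (↥(Subgroup.lowerCentralSeries (⊤ : Subgroup G) 1) ⧸ ((Subgroup.lowerCentralSeries (⊤ : Subgroup G) 2).subgroupOf (Subgroup.lowerCentralSeries (⊤ : Subgroup G) 1))))
    (helemexp : ∀ x ∈ Subgroup.lowerCentralSeries (⊤ : Subgroup G) 2, x ^ p = 1)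
    (helemab : ∀ x ∈ Subgroup.lowerCentralSeries (⊤ : Subgroup G) 2, ∀ y ∈ Subgroup.lowerCentralSeries (⊤ : Subgroup G) 2, x * y = y * x) :
    Subgroup.center G ⊓ Subgroup.lowerCentralSeries (⊤ : Subgroup G) 1
        = Subgroup.closure ((· ^ p) '' (Subgroup.lowerCentralSeries (⊤ : Subgroup G) 1 : Set G))
            ⊔ Subgroup.lowerCentralSeries (⊤ : Subgroup G) 2
      ∧ (Subgroup.closure ((· ^ p) '' (Subgroup.lowerCentralSeries (⊤ : Subgroup G) 1 : Set G))
            ⊔ Subgroup.lowerCentralSeries (⊤ : Subgroup G) 2).relIndex (Subgroup.lowerCentralSeries (⊤ : Subgroup G) 1) = p := by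
  classical
  obtain ⟨hne, hbot⟩ := hclass
  have hp : p.Prime := Fact.out
  set K := Subgroup.lowerCentralSeries (⊤ : Subgroup G) 1 with hKdef
  set N := Subgroup.lowerCentralSeries (⊤ : Subgroup G) 2 with hNdef
  -- basic facts
  have hNK : N ≤ K := Subgroup.lowerCentralSeries_antitone (S := (⊤ : Subgroup G)) (by norm_num)
  have hKN : N = ⁅K, (⊤ : Subgroup G)⁆ := rfl
  have hN3 : (⁅N, (⊤ : Subgroup G)⁆ : Subgroup G) = ⊥ := hbot
  have hNZ : N ≤ Subgroup.center G := by
    have h := Subgroup.commutator_eq_bot_iff_le_centralizer.mp hN3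
    rwa [Subgroup.coe_top, Subgroup.centralizer_univ] at h
  -- commutators with K-elements land in N, hence are central of order dividing p
  have hcommN : ∀ x ∈ K, ∀ g : G, ⁅x, g⁆ ∈ N := by
    intro x hx g
    rw [hKN]
    exact Subgroup.commutator_mem_commutator hx (Subgroup.mem_top g)
  have hcentral : ∀ n ∈ N, ∀ y : G, n * y = y * n := by
    intro n hn y
    exact ((Subgroup.mem_center_iff.mp (hNZ hn)) y).symm
  -- p-th powers of elements of K are central
  have hpowZ : ∀ x ∈ K, x ^ p ∈ Subgroup.center G := by
    intro x hx
    rw [Subgroup.mem_center_iff]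
    intro g
    have hc := hcommN x hx g
    have : ⁅x ^ p, g⁆ = 1 := by
      rw [aux_comm_pow (hcentral _ hc)]
      exact helemexp _ hc
    exact (commutatorElement_eq_one_iff_mul_comm.mp this).symm
  -- the subgroup H
  set H := Subgroup.closure ((· ^ p) '' (K : Set G)) ⊔ N with hHdef
  have hclK : Subgroup.closure ((· ^ p) '' (K : Set G)) ≤ K := by
    rw [Subgroup.closure_le]
    rintro _ ⟨x, hx, rfl⟩
    exact K.pow_mem hx p
  have hHK : H ≤ K := sup_le hclK hNK
  have hHZ : H ≤ Subgroup.center G := by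
    apply sup_le _ hNZ
    rw [Subgroup.closure_le]
    rintro _ ⟨x, hx, rfl⟩
    exact hpowZ x hx
  -- contradiction helper : K is not central
  have hKnotZ : ¬ K ≤ Subgroup.center G := by
    intro h
    apply hne
    rw [hKN]
    apply Subgroup.commutator_eq_bot_iff_le_centralizer.mpr
    rwa [Subgroup.coe_top, Subgroup.centralizer_univ]
  -- quotient setup
  haveI := hcyc
  set N' := N.subgroupOf K with hN'def
  set π := QuotientGroup.mk' N' with hπdef
  have hπsurj : Function.Surjective π := QuotientGroup.mk'_surjective N'
  obtain ⟨abar, habar⟩ := IsCyclic.exists_monoid_generator (α := K ⧸ N')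
  obtain ⟨a, ha⟩ := hπsurj abar
  -- representation lemma
  have hrep : ∀ x : K, ∃ k : ℕ, ∃ n ∈ N, (x : G) = (a : G) ^ k * n ∧ π x = abar ^ k := by
    intro x
    obtain ⟨k, hk0⟩ := habar (π x)
    have hk : abar ^ k = π x := hk0
    have hπeq : π (a ^ k) = π x := by rw [map_pow, ha, hk]
    have hmem : (a ^ k)⁻¹ * x ∈ N' := by
      rw [← QuotientGroup.ker_mk' N', MonoidHom.mem_ker, map_mul, map_inv, hπeq,
        inv_mul_cancel]
    have hmem' : ((a : G) ^ k)⁻¹ * (x : G) ∈ N := by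
      exact (Subgroup.mem_subgroupOf).mp hmem
    exact ⟨k, ((a : G) ^ k)⁻¹ * x, hmem', by group, hk.symm⟩
  -- a is not central
  have haNZ : (a : G) ∉ Subgroup.center G := by
    intro haZ
    apply hKnotZ
    intro x hx
    obtain ⟨k, n, hn, hxe, -⟩ := hrep ⟨x, hx⟩
    have hxe' : x = (a : G) ^ k * n := hxe
    rw [hxe']
    exact Subgroup.mul_mem _ (Subgroup.pow_mem _ haZ k) (hNZ hn)
  -- commutator computation for elements of K
  have hcommcalc : ∀ (k : ℕ) (n : G), n ∈ N → ∀ g : G,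
      ⁅(a : G) ^ k * n, g⁆ = ⁅(a : G), g⁆ ^ k := by
    intro k n hn g
    rw [aux_comm_mul_central (hcentral n hn),
      aux_comm_pow (hcentral _ (hcommN _ a.2 g))]
  -- first part: Z ⊓ K = H
  have hmain : Subgroup.center G ⊓ K = H := by
    apply le_antisymm
    · rintro z ⟨hz1, hz2⟩
      obtain ⟨k, n, hn, hze0, -⟩ := hrep ⟨z, hz2⟩
      have hze : z = (a : G) ^ k * n := hze0
      have hzk : ∀ g : G, ⁅(a : G), g⁆ ^ k = 1 := by
        intro g
        rw [← hcommcalc k n hn g, ← hze]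
        exact commutatorElement_eq_one_iff_mul_comm.mpr
          ((Subgroup.mem_center_iff.mp hz1 g).symm)
      have hpk : p ∣ k := by
        by_contra hpk
        apply haNZ
        rw [Subgroup.mem_center_iff]
        intro g
        have h1 : ⁅(a : G), g⁆ = 1 := by
          have hord : orderOf ⁅(a : G), g⁆ ∣ p := orderOf_dvd_of_pow_eq_one
            (helemexp _ (hcommN _ a.2 g))
          have hordk : orderOf ⁅(a : G), g⁆ ∣ k := orderOf_dvd_of_pow_eq_one (hzk g)
          rcases (Nat.Prime.eq_one_or_self_of_dvd hp _ hord) with h | h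
          · exact orderOf_eq_one_iff.mp h
          · exact absurd (h ▸ hordk) hpk
        exact (commutatorElement_eq_one_iff_mul_comm.mp h1).symm
      obtain ⟨m, rfl⟩ := hpk
      have hap : (a : G) ^ p ∈ Subgroup.closure ((· ^ p) '' (K : Set G)) :=
        Subgroup.subset_closure ⟨(a : G), a.2, rfl⟩
      have : z = (((a : G) ^ p) ^ m) * n := by rw [hze, pow_mul]
      rw [this]
      exact Subgroup.mul_mem _
        (Subgroup.mem_sup_left (Subgroup.pow_mem _ hap m)) (Subgroup.mem_sup_right hn)
    · exact le_inf hHZ hHK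
  -- the quotient is a nontrivial cyclic p-group
  have hQp : IsPGroup p (K ⧸ N') := (hG.to_subgroup K).to_quotient N'
  have habarne : abar ≠ 1 := by
    intro habar1
    apply hKnotZ
    intro x hx
    obtain ⟨k, hk0⟩ := habar (π ⟨x, hx⟩)
    have hk : abar ^ k = π ⟨x, hx⟩ := hk0
    have h1 : π ⟨x, hx⟩ = 1 := by rw [← hk, habar1, one_pow]
    have : (⟨x, hx⟩ : K) ∈ N' := (QuotientGroup.eq_one_iff _).mp h1
    exact hNZ ((Subgroup.mem_subgroupOf).mp this)
  -- subgroup identification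
  have hsub : H.subgroupOf K = Subgroup.comap π (Subgroup.zpowers (abar ^ p)) := by
    apply le_antisymm
    · intro x hx
      have hx' : (x : G) ∈ H := hx
      have hS : H ≤ (Subgroup.comap π (Subgroup.zpowers (abar ^ p))).map K.subtype := by
        apply sup_le
        · rw [Subgroup.closure_le]
          rintro _ ⟨y, hy, rfl⟩
          refine ⟨(⟨y, hy⟩ : K) ^ p, Subgroup.mem_comap.mpr ?_, rfl⟩
          obtain ⟨k, hk0⟩ := habar (π ⟨y, hy⟩)
          have hk : abar ^ k = π ⟨y, hy⟩ := hk0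
          rw [map_pow, ← hk, ← pow_mul, mul_comm, pow_mul]
          exact Subgroup.pow_mem _ (Subgroup.mem_zpowers _) k
        · intro n hn
          refine ⟨⟨n, hNK hn⟩, Subgroup.mem_comap.mpr ?_, rfl⟩
          have h1 : π ⟨n, hNK hn⟩ = 1 :=
            (QuotientGroup.eq_one_iff _).mpr ((Subgroup.mem_subgroupOf).mpr hn)
          rw [h1]
          exact Subgroup.one_mem _
      obtain ⟨y, hy, hyx⟩ := hS hx'
      rwa [show y = x from Subtype.ext hyx] at hy
    · intro x hx
      have hx2 : π x ∈ Subgroup.zpowers (abar ^ p) := hx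
      obtain ⟨j, hj0⟩ := mem_powers_iff_mem_zpowers.mpr hx2
      have hj : (abar ^ p) ^ j = π x := hj0
      have hj' : π (a ^ (p * j)) = π x := by
        rw [map_pow, ha, pow_mul, hj]
      have hmem : (a ^ (p * j))⁻¹ * x ∈ N' := by
        rw [← QuotientGroup.ker_mk' N', MonoidHom.mem_ker, map_mul, map_inv, hj',
          inv_mul_cancel]
      have hxe : (x : G) = ((a : G) ^ p) ^ j * (((a : G) ^ (p * j))⁻¹ * x) := by
        rw [← pow_mul]; group
      have hap : (a : G) ^ p ∈ Subgroup.closure ((· ^ p) '' (K : Set G)) :=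
        Subgroup.subset_closure ⟨(a : G), a.2, rfl⟩
      show (x : G) ∈ H
      rw [hxe]
      refine Subgroup.mul_mem _ (Subgroup.mem_sup_left (Subgroup.pow_mem _ hap j))
        (Subgroup.mem_sup_right ?_)
      exact (Subgroup.mem_subgroupOf).mp hmem
  -- index computation
  have hzabar : ∀ x, x ∈ Subgroup.zpowers abar := fun x =>
    Subgroup.zpowers_le.mpr (Subgroup.mem_zpowers abar) (by
      obtain ⟨k, hk⟩ := habar x
      exact hk ▸ Subgroup.pow_mem _ (Subgroup.mem_zpowers abar) k)
  obtain ⟨m, hm⟩ := IsPGroup.iff_orderOf.mp hQp abar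
  have hm1 : m ≠ 0 := by
    rintro rfl
    exact habarne (orderOf_eq_one_iff.mp (by rw [hm, pow_zero]))
  obtain ⟨m', rfl⟩ := Nat.exists_eq_succ_of_ne_zero hm1
  have hcardQ : Nat.card (K ⧸ N') = p ^ (m' + 1) := by
    rw [← orderOf_eq_card_of_forall_mem_zpowers hzabar, hm]
  have hordp : orderOf (abar ^ p) = p ^ m' := by
    rw [orderOf_pow' abar hp.ne_zero, hm]
    have hg : Nat.gcd (p ^ (m' + 1)) p = p :=
      Nat.gcd_eq_right (dvd_pow_self p (Nat.succ_ne_zero m'))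
    rw [hg, pow_succ, Nat.mul_div_cancel _ hp.pos]
  have hindex : (Subgroup.zpowers (abar ^ p)).index = p := by
    have hci := Subgroup.card_mul_index (Subgroup.zpowers (abar ^ p))
    rw [Nat.card_zpowers, hordp, hcardQ, pow_succ] at hci
    exact Nat.eq_of_mul_eq_mul_left (pow_pos hp.pos m') hci
  refine ⟨hmain, ?_⟩
  rw [Subgroup.relIndex, hsub, Subgroup.index_comap_of_surjective _ hπsurj, hindex]
end

section
/- Let X be a 2-generated finite p-group of nilpotency class 3 with γ₃(X) elementary abelian. Then p ≤ |γ₃(X)| ≤ p². -/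
open scoped commutatorElement

/-- Let `X` be a 2-generated finite `p`-group of nilpotency class 3 with `γ₃(X)` elementary
abelian. Then `p ≤ |γ₃(X)| ≤ p²`. -/
theorem gamma3_card_bounds (p : ℕ) [Fact p.Prime] (X : Type*) [Group X] [Fintype X]
    (hX : IsPGroup p X)
    (hgen : ∃ a b : X, Subgroup.closure {a, b} = ⊤)
    (hclass : (⊤ : Subgroup X).lowerCentralSeries 2 ≠ ⊥ ∧ (⊤ : Subgroup X).lowerCentralSeries 3 = ⊥)
    (helemexp : ∀ x ∈ (⊤ : Subgroup X).lowerCentralSeries 2, x ^ p = 1)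
    (helemab : ∀ x ∈ (⊤ : Subgroup X).lowerCentralSeries 2, ∀ y ∈ (⊤ : Subgroup X).lowerCentralSeries 2, x * y = y * x) :
    p ≤ Nat.card ((⊤ : Subgroup X).lowerCentralSeries 2) ∧ Nat.card ((⊤ : Subgroup X).lowerCentralSeries 2) ≤ p ^ 2 := by
  obtain ⟨a, b, hab⟩ := hgen
  obtain ⟨hne, h3⟩ := hclass
  have hp : p.Prime := Fact.out
  set N := (⊤ : Subgroup X).lowerCentralSeries 2 with hNdef
  have h3' : (⁅N, (⊤ : Subgroup X)⁆ : Subgroup X) = ⊥ := h3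
  have h2' : N = (⁅(⊤ : Subgroup X).lowerCentralSeries 1, (⊤ : Subgroup X)⁆ : Subgroup X) := rfl
  -- elements of N are central
  have hcent : ∀ n ∈ N, ∀ x : X, n * x = x * n := by
    intro n hn x
    have : ⁅n, x⁆ ∈ (⊥ : Subgroup X) := by
      rw [← h3']
      exact Subgroup.commutator_mem_commutator hn (Subgroup.mem_top x)
    exact commutatorElement_eq_one_iff_mul_comm.mp (Subgroup.mem_bot.mp this)
  have hmemN : ∀ g ∈ (⊤ : Subgroup X).lowerCentralSeries 1, ∀ x : X, ⁅g, x⁆ ∈ N := fun g hg x =>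
    h2' ▸ Subgroup.commutator_mem_commutator hg (Subgroup.mem_top x)
  -- general group identity
  have hid : ∀ g h x : X, ⁅g * h, x⁆ = g * ⁅h, x⁆ * g⁻¹ * ⁅g, x⁆ := by
    intro g h x; simp only [commutatorElement_def]; group
  -- if ⁅h,x⁆ is central then ⁅g*h,x⁆ = ⁅h,x⁆ * ⁅g,x⁆
  have hmul : ∀ g h x : X, (∀ y : X, ⁅h, x⁆ * y = y * ⁅h, x⁆) →
      ⁅g * h, x⁆ = ⁅h, x⁆ * ⁅g, x⁆ := by
    intro g h x hc
    rw [hid, ← hc g, mul_inv_cancel_right]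
  -- if ⁅g,x⁆ is central then ⁅g⁻¹,x⁆ = ⁅g,x⁆⁻¹
  have hinv : ∀ g x : X, (∀ y : X, ⁅g, x⁆ * y = y * ⁅g, x⁆) →
      ⁅g⁻¹, x⁆ = ⁅g, x⁆⁻¹ := by
    intro g x hc
    have e : ⁅g⁻¹, x⁆ = g⁻¹ * ⁅g, x⁆⁻¹ * g := by
      simp only [commutatorElement_def]; group
    have hcm : Commute ⁅g, x⁆ g := hc g
    have hcc : ⁅g, x⁆⁻¹ * g = g * ⁅g, x⁆⁻¹ := hcm.inv_left.eq
    rw [e, mul_assoc, hcc, ← mul_assoc, inv_mul_cancel, one_mul]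
  -- central insertion : if e central then ⁅g * e, x⁆ = ⁅g, x⁆
  have hins : ∀ g e x : X, (∀ y : X, e * y = y * e) → ⁅g * e, x⁆ = ⁅g, x⁆ := by
    intro g e x hc
    have h0 : g * e * x * e⁻¹ * g⁻¹ * x⁻¹ = ⁅g * e, x⁆ := by
      simp only [commutatorElement_def]; group
    have h2 : e * x * e⁻¹ = x := by rw [hc x, mul_inv_cancel_right]
    rw [← h0]
    calc g * e * x * e⁻¹ * g⁻¹ * x⁻¹ = g * (e * x * e⁻¹) * g⁻¹ * x⁻¹ := by group
      _ = g * x * g⁻¹ * x⁻¹ := by rw [h2]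
      _ = ⁅g, x⁆ := (commutatorElement_def g x).symm
  -- right-hand versions
  have hmulr : ∀ g x y : X, (∀ z : X, ⁅g, y⁆ * z = z * ⁅g, y⁆) →
      ⁅g, x * y⁆ = ⁅g, x⁆ * ⁅g, y⁆ := by
    intro g x y hc
    have e : ⁅g, x * y⁆ = ⁅g, x⁆ * (x * ⁅g, y⁆ * x⁻¹) := by
      simp only [commutatorElement_def]; group
    rw [e, ← hc x, mul_inv_cancel_right]
  have hinvr : ∀ g x : X, (∀ y : X, ⁅g, x⁆ * y = y * ⁅g, x⁆) →
      ⁅g, x⁻¹⁆ = ⁅g, x⁆⁻¹ := by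
    intro g x hc
    have e : ⁅g, x⁻¹⁆ = x⁻¹ * ⁅g, x⁆⁻¹ * x := by
      simp only [commutatorElement_def]; group
    have hcm : Commute ⁅g, x⁆ x := hc x
    have hcc : ⁅g, x⁆⁻¹ * x = x * ⁅g, x⁆⁻¹ := hcm.inv_left.eq
    rw [e, mul_assoc, hcc, ← mul_assoc, inv_mul_cancel, one_mul]
  set g₁ := ⁅⁅a, b⁆, a⁆ with hg₁def
  set g₂ := ⁅⁅a, b⁆, b⁆ with hg₂def
  set M := Subgroup.closure {g₁, g₂} with hMdef
  have habm : ⁅a, b⁆ ∈ (⊤ : Subgroup X).lowerCentralSeries 1 :=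
    Subgroup.commutator_mem_commutator (Subgroup.mem_top a) (Subgroup.mem_top b)
  have hg₁N : g₁ ∈ N := hmemN _ habm a
  have hg₂N : g₂ ∈ N := hmemN _ habm b
  have hMN : M ≤ N := by
    rw [hMdef, Subgroup.closure_le]
    rintro x (rfl | rfl)
    · exact hg₁N
    · exact hg₂N
  -- centrality helper for commutator values
  have hcv : ∀ g ∈ (⊤ : Subgroup X).lowerCentralSeries 1, ∀ x y : X, ⁅g, x⁆ * y = y * ⁅g, x⁆ :=
    fun g hg x y => hcent _ (hmemN g hg x) y
  have hone : ∀ s u : X, ⁅⁅u, u⁆, s⁆ ∈ M := by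
    intro s u
    have h1 : ⁅u, u⁆ = (1 : X) := commutatorElement_eq_one_iff_mul_comm.mpr rfl
    have h2 : ⁅(1 : X), s⁆ = 1 := by simp [commutatorElement_def]
    rw [h1, h2]; exact M.one_mem
  -- Step 1: reduce x to a, b
  have claimX : ∀ g ∈ (⊤ : Subgroup X).lowerCentralSeries 1, ⁅g, a⁆ ∈ M → ⁅g, b⁆ ∈ M →
      ∀ x : X, ⁅g, x⁆ ∈ M := by
    intro g hg ha hb x
    have hx : x ∈ Subgroup.closure ({a, b} : Set X) := hab ▸ Subgroup.mem_top x
    induction hx using Subgroup.closure_induction with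
    | mem z hz => rcases hz with rfl | rfl
                  · exact ha
                  · exact hb
    | one => simpa using M.one_mem
    | mul u v _ _ hu hv =>
        rw [hmulr g u v (hcv g hg v)]; exact M.mul_mem hu hv
    | inv u _ hu =>
        rw [hinvr g u (hcv g hg u)]; exact M.inv_mem hu
  -- Step 2: ⁅⁅u,v⁆,t⁆ ∈ M for t ∈ {a,b} and all u v
  have claimUV : ∀ t ∈ ({a, b} : Set X), ∀ u v : X, ⁅⁅u, v⁆, t⁆ ∈ M := by
    intro t ht u v
    -- inner: v-induction for fixed u, given base cases
    have vstep : ∀ u : X, (∀ v0 ∈ ({a, b} : Set X), ⁅⁅u, v0⁆, t⁆ ∈ M) →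
        ∀ v : X, ⁅⁅u, v⁆, t⁆ ∈ M := by
      intro u hbase v
      have hv : v ∈ Subgroup.closure ({a, b} : Set X) := hab ▸ Subgroup.mem_top v
      induction hv using Subgroup.closure_induction with
      | mem z hz => exact hbase z hz
      | one => simpa using M.one_mem
      | mul v₁ v₂ _ _ h1 h2 =>
          have huv₁ : ⁅u, v₁⁆ ∈ (⊤ : Subgroup X).lowerCentralSeries 1 :=
            Subgroup.commutator_mem_commutator (Subgroup.mem_top u) (Subgroup.mem_top v₁)
          have huv₂ : ⁅u, v₂⁆ ∈ (⊤ : Subgroup X).lowerCentralSeries 1 :=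
            Subgroup.commutator_mem_commutator (Subgroup.mem_top u) (Subgroup.mem_top v₂)
          -- ⁅u, v₁*v₂⁆ = ⁅u,v₁⁆ * ⁅u,v₂⁆ * e with e ∈ N
          have e1 : ⁅u, v₁ * v₂⁆ = ⁅u, v₁⁆ * (v₁ * ⁅u, v₂⁆ * v₁⁻¹) := by
            simp only [commutatorElement_def]; group
          have e2 : v₁ * ⁅u, v₂⁆ * v₁⁻¹ = ⁅u, v₂⁆ * ⁅⁅u, v₂⁆⁻¹, v₁⁆ := by
            simp only [commutatorElement_def]; group
          have heN : ⁅⁅u, v₂⁆⁻¹, v₁⁆ ∈ N :=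
            hmemN _ (((⊤ : Subgroup X).lowerCentralSeries 1).inv_mem huv₂) v₁
          have e3 : ⁅⁅u, v₁ * v₂⁆, t⁆ = ⁅⁅u, v₁⁆ * ⁅u, v₂⁆, t⁆ := by
            rw [e1, e2, ← mul_assoc]
            exact hins _ _ t (fun y => hcent _ heN y)
          rw [e3, hmul _ _ t (hcv _ huv₂ t)]
          exact M.mul_mem h2 h1
      | inv v₁ _ h1 =>
          have huv₁ : ⁅u, v₁⁆ ∈ (⊤ : Subgroup X).lowerCentralSeries 1 :=
            Subgroup.commutator_mem_commutator (Subgroup.mem_top u) (Subgroup.mem_top v₁)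
          have e1 : ⁅u, v₁⁻¹⁆ = ⁅u, v₁⁆⁻¹ * ⁅⁅u, v₁⁆, v₁⁻¹⁆ := by
            simp only [commutatorElement_def]; group
          have heN : ⁅⁅u, v₁⁆, v₁⁻¹⁆ ∈ N := hmemN _ huv₁ v₁⁻¹
          have e3 : ⁅⁅u, v₁⁻¹⁆, t⁆ = ⁅⁅u, v₁⁆⁻¹, t⁆ := by
            rw [e1]; exact hins _ _ t (fun y => hcent _ heN y)
          rw [e3, hinv _ t (hcv _ huv₁ t)]
          exact M.inv_mem h1
    -- outer: u-induction
    have hu : u ∈ Subgroup.closure ({a, b} : Set X) := hab ▸ Subgroup.mem_top u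
    induction hu using Subgroup.closure_induction with
    | mem z hz =>
        refine vstep z ?_ v
        intro v0 hv0
        have hcab : ∀ s : X, ⁅⁅a, b⁆, s⁆ ∈ M → ⁅⁅b, a⁆, s⁆ ∈ M := by
          intro s hs
          have : ⁅⁅b, a⁆, s⁆ = ⁅⁅a, b⁆, s⁆⁻¹ := by
            rw [← commutatorElement_inv a b]
            exact hinv _ s (hcv _ habm s)
          rw [this]; exact M.inv_mem hs
        rcases hz with rfl | rfl <;> rcases hv0 with rfl | rfl <;>
          rcases ht with rfl | rfl
        · exact hone _ _
        · exact hone _ _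
        · exact Subgroup.subset_closure (Or.inl rfl)
        · exact Subgroup.subset_closure (Or.inr rfl)
        · exact hcab _ (Subgroup.subset_closure (Or.inl rfl))
        · exact hcab _ (Subgroup.subset_closure (Or.inr rfl))
        · exact hone _ _
        · exact hone _ _
    | one => simpa using M.one_mem
    | mul u₁ u₂ _ _ h1 h2 =>
        have hu₁ : ⁅u₁, v⁆ ∈ (⊤ : Subgroup X).lowerCentralSeries 1 :=
          Subgroup.commutator_mem_commutator (Subgroup.mem_top u₁) (Subgroup.mem_top v)
        have hu₂ : ⁅u₂, v⁆ ∈ (⊤ : Subgroup X).lowerCentralSeries 1 :=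
          Subgroup.commutator_mem_commutator (Subgroup.mem_top u₂) (Subgroup.mem_top v)
        have e1 : ⁅u₁ * u₂, v⁆ = u₁ * ⁅u₂, v⁆ * u₁⁻¹ * ⁅u₁, v⁆ := hid u₁ u₂ v
        have e2 : u₁ * ⁅u₂, v⁆ * u₁⁻¹ = ⁅u₂, v⁆ * ⁅⁅u₂, v⁆⁻¹, u₁⁆ := by
          simp only [commutatorElement_def]; group
        have heN : ⁅⁅u₂, v⁆⁻¹, u₁⁆ ∈ N :=
          hmemN _ (((⊤ : Subgroup X).lowerCentralSeries 1).inv_mem hu₂) u₁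
        have e3 : ⁅⁅u₁ * u₂, v⁆, t⁆ = ⁅⁅u₂, v⁆ * ⁅u₁, v⁆, t⁆ := by
          rw [e1, e2]
          have : ⁅u₂, v⁆ * ⁅⁅u₂, v⁆⁻¹, u₁⁆ * ⁅u₁, v⁆
              = ⁅u₂, v⁆ * ⁅u₁, v⁆ * ⁅⁅u₂, v⁆⁻¹, u₁⁆ := by
            rw [mul_assoc, hcent _ heN ⁅u₁, v⁆, ← mul_assoc]
          rw [this]
          exact hins _ _ t (fun y => hcent _ heN y)
        rw [e3, hmul _ _ t (hcv _ hu₁ t)]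
        exact M.mul_mem h1 h2
    | inv u₁ _ h1 =>
        have hu₁ : ⁅u₁, v⁆ ∈ (⊤ : Subgroup X).lowerCentralSeries 1 :=
          Subgroup.commutator_mem_commutator (Subgroup.mem_top u₁) (Subgroup.mem_top v)
        have e1 : ⁅u₁⁻¹, v⁆ = ⁅u₁, v⁆⁻¹ * ⁅⁅u₁, v⁆, u₁⁻¹⁆ := by
          simp only [commutatorElement_def]; group
        have heN : ⁅⁅u₁, v⁆, u₁⁻¹⁆ ∈ N := hmemN _ hu₁ u₁⁻¹
        have e3 : ⁅⁅u₁⁻¹, v⁆, t⁆ = ⁅⁅u₁, v⁆⁻¹, t⁆ := by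
          rw [e1]; exact hins _ _ t (fun y => hcent _ heN y)
        rw [e3, hinv _ t (hcv _ hu₁ t)]
        exact M.inv_mem h1
  -- Step 3: all g in γ₂
  have claimG : ∀ g ∈ (⊤ : Subgroup X).lowerCentralSeries 1, ∀ x : X, ⁅g, x⁆ ∈ M := by
    intro g hg
    have hg' : g ∈ Subgroup.closure
        {g : X | ∃ g₁ ∈ (⊤ : Subgroup X), ∃ g₂ ∈ (⊤ : Subgroup X), ⁅g₁, g₂⁆ = g} := by
      rw [← Subgroup.commutator_def]; exact hg
    clear hg
    induction hg' using Subgroup.closure_induction with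
    | mem z hz =>
        obtain ⟨u, -, v, -, rfl⟩ := hz
        intro x
        exact claimX _ (Subgroup.commutator_mem_commutator (Subgroup.mem_top u)
          (Subgroup.mem_top v)) (claimUV a (Or.inl rfl) u v) (claimUV b (Or.inr rfl) u v) x
    | one => intro x; simpa using M.one_mem
    | mul g h hgm hhm h1 h2 =>
        intro x
        have hgc : g ∈ (⊤ : Subgroup X).lowerCentralSeries 1 := by
          rw [show (⊤ : Subgroup X).lowerCentralSeries 1 = _ from Subgroup.commutator_def ⊤ ⊤]; exact hgm
        have hhc : h ∈ (⊤ : Subgroup X).lowerCentralSeries 1 := by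
          rw [show (⊤ : Subgroup X).lowerCentralSeries 1 = _ from Subgroup.commutator_def ⊤ ⊤]; exact hhm
        rw [hmul g h x (hcv h hhc x)]
        exact M.mul_mem (h2 x) (h1 x)
    | inv g hgm h1 =>
        intro x
        have hgc : g ∈ (⊤ : Subgroup X).lowerCentralSeries 1 := by
          rw [show (⊤ : Subgroup X).lowerCentralSeries 1 = _ from Subgroup.commutator_def ⊤ ⊤]; exact hgm
        rw [hinv g x (hcv g hgc x)]
        exact M.inv_mem (h1 x)
  have hNM : N = M := by
    refine le_antisymm ?_ hMN
    rw [h2']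
    exact Subgroup.commutator_le.mpr fun g hg x _ => claimG g hg x
  -- counting
  haveI : NeZero p := ⟨hp.ne_zero⟩
  have hc12 : Commute g₁ g₂ := helemab g₁ hg₁N g₂ hg₂N
  have hpow : ∀ g ∈ N, ∀ m : ℕ, g ^ m = g ^ (m % p) := by
    intro g hg m
    conv_lhs => rw [← Nat.mod_add_div m p]
    rw [pow_add, pow_mul, helemexp g hg, one_pow, mul_one]
  -- surjection from ZMod p × ZMod p
  have hsurj : Function.Surjective
      (fun ij : ZMod p × ZMod p => (⟨g₁, hg₁N⟩ : N) ^ (ij.1.val) * (⟨g₂, hg₂N⟩ : N) ^ (ij.2.val)) := by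
    rintro ⟨n, hn⟩
    have hn' : n ∈ M := hNM ▸ hn
    have : ∃ m k : ℕ, n = g₁ ^ m * g₂ ^ k := by
      clear hn
      induction hn' using Subgroup.closure_induction with
      | mem z hz =>
          rcases hz with rfl | rfl
          · exact ⟨1, 0, by simp⟩
          · exact ⟨0, 1, by simp⟩
      | one => exact ⟨0, 0, by simp⟩
      | mul u v _ _ h1 h2 =>
          obtain ⟨m1, k1, rfl⟩ := h1
          obtain ⟨m2, k2, rfl⟩ := h2
          refine ⟨m1 + m2, k1 + k2, ?_⟩
          rw [pow_add, pow_add]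
          have := (hc12.symm.pow_pow k1 m2)
          rw [mul_assoc, ← mul_assoc (g₂ ^ k1), this, mul_assoc, ← mul_assoc]
      | inv u _ h1 =>
          obtain ⟨m1, k1, rfl⟩ := h1
          refine ⟨m1 * (p - 1), k1 * (p - 1), ?_⟩
          have hinvpow : ∀ g ∈ N, ∀ m : ℕ, (g ^ m)⁻¹ = g ^ (m * (p - 1)) := by
            intro g hg m
            rw [inv_eq_iff_mul_eq_one, ← pow_add]
            have hp1 : p - 1 + 1 = p := Nat.succ_pred_eq_of_pos hp.pos
            have hme : m + m * (p - 1) = m * (p - 1 + 1) := by ring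
            rw [hme, hp1, pow_mul', helemexp g hg, one_pow]
          rw [mul_inv_rev, hinvpow g₁ hg₁N, hinvpow g₂ hg₂N,
            (hc12.pow_pow _ _).eq]
    obtain ⟨m, k, rfl⟩ := this
    refine ⟨((m : ZMod p), (k : ZMod p)), ?_⟩
    ext
    push_cast [Subgroup.coe_mul, SubgroupClass.coe_pow]
    rw [ZMod.val_natCast, ZMod.val_natCast, ← hpow g₁ hg₁N m, ← hpow g₂ hg₂N k]
  have hub : Nat.card N ≤ p ^ 2 := by
    have := Nat.card_le_card_of_surjective _ hsurj
    simpa [Nat.card_prod, Nat.card_zmod, sq] using this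
  -- lower bound
  have hNp : IsPGroup p N := hX.to_subgroup N
  obtain ⟨k, hk⟩ := hNp.exists_card_eq
  have hk0 : k ≠ 0 := by
    rintro rfl
    exact hne (Subgroup.card_eq_one.mp (by simpa using hk))
  have hlb : p ≤ Nat.card N := by
    rw [hk]
    calc p = p ^ 1 := (pow_one p).symm
    _ ≤ p ^ k := Nat.pow_le_pow_right hp.pos (Nat.one_le_iff_ne_zero.mpr hk0)
  exact ⟨hlb, hub⟩
end

section
/- Let 𝒪 be a p-obelisk. Then for every positive integer i, γ_i(𝒪)^p = γ_{i+2}(𝒪). -/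
open scoped commutatorElement

notation "LCS " G:max n:max => Subgroup.lowerCentralSeries (⊤ : Subgroup G) n

namespace ObeliskAux

variable {G : Type*} [Group G]

lemma lcs_succ' {G : Type*} [Group G] (n : ℕ) :
    LCS G (n + 1) = ⁅LCS G n, ⊤⁆ := rfl

lemma conj_pow_eq (x a : G) (n : ℕ) : x * a ^ n * x⁻¹ = (x * a * x⁻¹) ^ n := by
  induction n with
  | zero => simp
  | succ k ih => rw [pow_succ, pow_succ, ← ih]; group

lemma closure_conj_invariant_normal {S : Set G}
    (h : ∀ g : G, ∀ s ∈ S, g * s * g⁻¹ ∈ S) : (Subgroup.closure S).Normal := by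
  constructor
  intro n hn g
  have hmap : Subgroup.map (MulAut.conj g).toMonoidHom (Subgroup.closure S)
      = Subgroup.closure ((MulAut.conj g).toMonoidHom '' S) :=
    MonoidHom.map_closure _ _
  have hle : Subgroup.map (MulAut.conj g).toMonoidHom (Subgroup.closure S)
      ≤ Subgroup.closure S := by
    rw [hmap]
    apply Subgroup.closure_le _ |>.2
    rintro _ ⟨s, hs, rfl⟩
    exact Subgroup.subset_closure (by simpa using h g s hs)
  have := hle (Subgroup.mem_map_of_mem _ hn)
  simpa using this

lemma commutator_mem_lcs_succ_left {n : ℕ} {c : G} (hc : c ∈ LCS G n) (a : G) :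
    ⁅c, a⁆ ∈ LCS G (n + 1) := by
  rw [lcs_succ']
  exact Subgroup.commutator_mem_commutator hc (Subgroup.mem_top a)

lemma commutator_mem_lcs_succ_right {n : ℕ} {c : G} (hc : c ∈ LCS G n) (a : G) :
    ⁅a, c⁆ ∈ LCS G (n + 1) := by
  have h := (LCS G (n + 1)).inv_mem (commutator_mem_lcs_succ_left hc a)
  rwa [commutatorElement_inv] at h

lemma lcs_map_surj {H : Type*} [Group H] (f : G →* H) (hf : Function.Surjective f) (n : ℕ) :
    (LCS G n).map f = LCS H n := by
  induction n with
  | zero => simpa using Subgroup.map_top_of_surjective f hf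
  | succ n ih =>
    rw [lcs_succ', lcs_succ', Subgroup.map_commutator, ih,
      Subgroup.map_top_of_surjective f hf]

lemma mem_lcs_map {H : Type*} [Group H] (f : G →* H) {n : ℕ} {y : G}
    (hy : y ∈ LCS G n) : f y ∈ LCS H n :=
  Subgroup.lowerCentralSeries.map f n (Subgroup.mem_map_of_mem f hy)

lemma exists_lift_of_mem_lcs {N : Subgroup G} [N.Normal] {n : ℕ} {z : G ⧸ N}
    (hz : z ∈ LCS (G ⧸ N) n) :
    ∃ y ∈ LCS G n, (QuotientGroup.mk' N) y = z := by
  rw [← lcs_map_surj (QuotientGroup.mk' N) (QuotientGroup.mk'_surjective N) n] at hz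
  simpa [Subgroup.mem_map] using hz

lemma lcs_quotient_eq_bot {n k : ℕ} (h : n ≤ k) :
    LCS (G ⧸ LCS G n) k = ⊥ := by
  have h2 : LCS (G ⧸ LCS G n) n = ⊥ := by
    rw [← lcs_map_surj (QuotientGroup.mk' _) (QuotientGroup.mk'_surjective _) n,
      Subgroup.map_eq_bot_iff, QuotientGroup.ker_mk']
  exact le_bot_iff.mp (h2 ▸ Subgroup.lowerCentralSeries_antitone ⊤ h)

universe u

lemma lcs_comm_le (n : ℕ) : ∀ {G' : Type u} [Group G'] (m : ℕ),
    ⁅LCS G' m, LCS G' n⁆ ≤ LCS G' (m + n + 1) := by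
  induction n with
  | zero =>
    intro G' _ m
    rw [Subgroup.lowerCentralSeries_zero]
    exact le_of_eq (lcs_succ' m).symm
  | succ n ih =>
    intro G' _ m
    set N := LCS G' (m + (n + 1) + 1) with hN
    let π := QuotientGroup.mk' N
    have hπ : Function.Surjective π := QuotientGroup.mk'_surjective N
    have hbot : LCS (G' ⧸ N) (m + (n + 1) + 1) = ⊥ := by
      rw [← lcs_map_surj π hπ, Subgroup.map_eq_bot_iff, QuotientGroup.ker_mk']
    have key : ⁅⁅LCS (G' ⧸ N) n, (⊤ : Subgroup (G' ⧸ N))⁆,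
        LCS (G' ⧸ N) m⁆ = ⊥ := by
      apply Subgroup.commutator_commutator_eq_bot_of_rotate
      · rw [Subgroup.commutator_comm (⊤ : Subgroup (G' ⧸ N)) (LCS (G' ⧸ N) m),
          ← lcs_succ']
        refine le_bot_iff.mp ?_
        calc ⁅LCS (G' ⧸ N) (m + 1), LCS (G' ⧸ N) n⁆
            ≤ LCS (G' ⧸ N) (m + 1 + n + 1) := ih (m + 1)
          _ ≤ LCS (G' ⧸ N) (m + (n + 1) + 1) :=
              Subgroup.lowerCentralSeries_antitone ⊤ (by omega)
          _ = ⊥ := hbot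
      · refine le_bot_iff.mp ?_
        calc ⁅⁅LCS (G' ⧸ N) m, LCS (G' ⧸ N) n⁆,
              (⊤ : Subgroup (G' ⧸ N))⁆
            ≤ ⁅LCS (G' ⧸ N) (m + n + 1), (⊤ : Subgroup (G' ⧸ N))⁆ :=
              Subgroup.commutator_mono (ih m) le_rfl
          _ = LCS (G' ⧸ N) (m + n + 1 + 1) := (lcs_succ' _).symm
          _ ≤ LCS (G' ⧸ N) (m + (n + 1) + 1) :=
              Subgroup.lowerCentralSeries_antitone ⊤ (by omega)
          _ = ⊥ := hbot
    have himg : Subgroup.map π ⁅LCS G' m, LCS G' (n + 1)⁆ = ⊥ := by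
      rw [Subgroup.map_commutator, lcs_map_surj π hπ, lcs_map_surj π hπ, lcs_succ' n,
        Subgroup.commutator_comm]
      exact key
    have := (Subgroup.map_eq_bot_iff _).mp himg
    rwa [QuotientGroup.ker_mk'] at this

lemma commute_of_lcs_bot {Q : Type*} [Group Q] {a b : Q} {s t n : ℕ}
    (ha : a ∈ LCS Q s) (hb : b ∈ LCS Q t)
    (hn : n ≤ s + t + 1) (hbot : LCS Q n = ⊥) : Commute a b := by
  have h1 : ⁅a, b⁆ ∈ LCS Q (s + t + 1) :=
    lcs_comm_le t s (Subgroup.commutator_mem_commutator ha hb)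
  have h2 : LCS Q (s + t + 1) ≤ ⊥ := hbot ▸ Subgroup.lowerCentralSeries_antitone ⊤ hn
  exact commutatorElement_eq_one_iff_commute.mp (Subgroup.mem_bot.mp (h2 h1))

lemma commutator_closure_top_le {T : Set G} {M : Subgroup G} [M.Normal]
    (h : ∀ t ∈ T, ∀ g : G, ⁅t, g⁆ ∈ M) : ⁅Subgroup.closure T, (⊤ : Subgroup G)⁆ ≤ M := by
  rw [Subgroup.commutator_le]
  intro a ha g _
  set π := QuotientGroup.mk' M with hπdef
  have hc : Subgroup.closure T ≤ Subgroup.comap π (Subgroup.center (G ⧸ M)) := by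
    rw [Subgroup.closure_le]
    intro t ht
    rw [SetLike.mem_coe, Subgroup.mem_comap, Subgroup.mem_center_iff]
    intro q
    obtain ⟨g', rfl⟩ := QuotientGroup.mk'_surjective M q
    have h1 : ⁅π t, π g'⁆ = 1 := by
      rw [← map_commutatorElement]
      rw [← QuotientGroup.ker_mk' M, ← hπdef] at h
      exact MonoidHom.mem_ker.mp (h t ht g')
    exact ((commutatorElement_eq_one_iff_commute.mp h1).symm).eq
  have ha' := hc ha
  rw [Subgroup.mem_comap, Subgroup.mem_center_iff] at ha'
  have h2 : π ⁅a, g⁆ = 1 := by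
    rw [map_commutatorElement]
    exact commutatorElement_eq_one_iff_commute.mpr (ha' (π g)).symm
  have h3 : ⁅a, g⁆ ∈ π.ker := MonoidHom.mem_ker.mpr h2
  rwa [hπdef, QuotientGroup.ker_mk'] at h3

lemma frattini_lcs {H K : Subgroup G} [H.Normal] (hnil : Group.IsNilpotent (G ⧸ H))
    (hK : K ≤ H ⊔ ⁅K, (⊤ : Subgroup G)⁆) : K ≤ H := by
  set π := QuotientGroup.mk' H with hπdef
  have hHbot : Subgroup.map π H = ⊥ := by
    rw [Subgroup.map_eq_bot_iff, hπdef, QuotientGroup.ker_mk']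
  have main : ∀ n, Subgroup.map π K ≤ LCS (G ⧸ H) n := by
    intro n
    induction n with
    | zero => exact le_top
    | succ n ih =>
      calc Subgroup.map π K ≤ Subgroup.map π (H ⊔ ⁅K, ⊤⁆) := Subgroup.map_mono hK
        _ = Subgroup.map π H ⊔ Subgroup.map π ⁅K, ⊤⁆ := Subgroup.map_sup _ _ _
        _ = ⊥ ⊔ ⁅Subgroup.map π K, Subgroup.map π ⊤⁆ := by
            rw [hHbot, Subgroup.map_commutator]
        _ ≤ ⁅LCS (G ⧸ H) n, ⊤⁆ := by
            rw [bot_sup_eq]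
            exact Subgroup.commutator_mono ih le_top
        _ = LCS (G ⧸ H) (n + 1) := (lcs_succ' _).symm
  obtain ⟨n, hn⟩ := Subgroup.nilpotent_iff_lowerCentralSeries.mp hnil
  have hb : Subgroup.map π K = ⊥ := le_bot_iff.mp (hn ▸ main n)
  have := (Subgroup.map_eq_bot_iff _).mp hb
  rwa [hπdef, QuotientGroup.ker_mk'] at this

lemma pow_eq_one_of_commutator_gen {A N : Subgroup G} {q : ℕ}
    (hN : ⁅A, (⊤ : Subgroup G)⁆ = N)
    (hab : ∀ y ∈ N, ∀ z ∈ N, Commute y z)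
    (hgen : ∀ a ∈ A, ∀ g : G, ⁅a, g⁆ ^ q = 1) :
    ∀ y ∈ N, y ^ q = 1 := by
  let U : Subgroup G :=
    { carrier := {y | y ∈ N ∧ y ^ q = 1}
      one_mem' := ⟨N.one_mem, one_pow q⟩
      mul_mem' := fun {a b} ha hb => ⟨N.mul_mem ha.1 hb.1, by
        rw [(hab a ha.1 b hb.1).mul_pow, ha.2, hb.2, one_mul]⟩
      inv_mem' := fun {a} ha => ⟨N.inv_mem ha.1, by rw [inv_pow, ha.2, inv_one]⟩ }
  intro y hy
  have hle : N ≤ U := by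
    rw [← hN, Subgroup.commutator_le]
    intro a ha g hg
    exact ⟨hN ▸ Subgroup.commutator_mem_commutator ha hg, hgen a ha g⟩
  exact (hle hy).2

lemma hp3 (x g : G)
    (hcd : Commute ⁅x, g⁆ ⁅x, ⁅x, g⁆⁆)
    (hce : Commute ⁅x, g⁆ ⁅x, ⁅x, ⁅x, g⁆⁆⁆)
    (hde : Commute ⁅x, ⁅x, g⁆⁆ ⁅x, ⁅x, ⁅x, g⁆⁆⁆)
    (hxe : Commute x ⁅x, ⁅x, ⁅x, g⁆⁆⁆) :
    ∀ k : ℕ, ⁅x ^ k, g⁆ =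
      ⁅x, g⁆ ^ k * ⁅x, ⁅x, g⁆⁆ ^ k.choose 2 * ⁅x, ⁅x, ⁅x, g⁆⁆⁆ ^ k.choose 3 := by
  set c := ⁅x, g⁆ with hc
  set d := ⁅x, c⁆ with hd
  set e := ⁅x, d⁆ with he
  have hxc : x * c * x⁻¹ = d * c := by
    rw [hd, commutatorElement_def]; group
  have hxd : x * d * x⁻¹ = e * d := by
    rw [he, commutatorElement_def]; group
  have hxe' : x * e * x⁻¹ = e := by
    rw [hxe.eq, mul_inv_cancel_right]
  intro k
  induction k with
  | zero => simp
  | succ k ih =>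
    have hstep : ⁅x ^ (k + 1), g⁆ = x * ⁅x ^ k, g⁆ * x⁻¹ * c := by
      rw [hc]; simp only [commutatorElement_def]; group
    rw [hstep, ih]
    have expand : ∀ u v w : G, x * (u * v * w) * x⁻¹
        = (x * u * x⁻¹) * (x * v * x⁻¹) * (x * w * x⁻¹) := by
      intros; group
    rw [expand, conj_pow_eq, conj_pow_eq, conj_pow_eq, hxc, hxd, hxe',
      hcd.symm.mul_pow, hde.symm.mul_pow]
    have h2 : (k + 1).choose 2 = k + k.choose 2 := by
      rw [Nat.choose_succ_succ, Nat.choose_one_right]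
    have h3 : (k + 1).choose 3 = k.choose 2 + k.choose 3 := by
      rw [Nat.choose_succ_succ]
    rw [h2, h3]
    set B := k.choose 2
    set F := k.choose 3
    calc d ^ k * c ^ k * (e ^ B * d ^ B) * e ^ F * c
        = d ^ k * c ^ k * (d ^ B * e ^ B) * e ^ F * c := by
          rw [(hde.pow_pow B B).symm.eq]
      _ = d ^ k * (c ^ k * d ^ B) * (e ^ B * e ^ F) * c := by
          simp only [mul_assoc]
      _ = d ^ k * (d ^ B * c ^ k) * (e ^ B * e ^ F) * c := by
          rw [(hcd.pow_pow k B).eq]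
      _ = d ^ (k + B) * (c ^ k * (e ^ (B + F) * c)) := by
          simp only [pow_add, mul_assoc]
      _ = d ^ (k + B) * (c ^ k * (c * e ^ (B + F))) := by
          rw [((hce.pow_right (B + F)).eq).symm]
      _ = d ^ (k + B) * (c ^ (k + 1) * e ^ (B + F)) := by
          rw [pow_succ, mul_assoc]
      _ = c ^ (k + 1) * d ^ (k + B) * e ^ (B + F) := by
          rw [← mul_assoc, (hcd.symm.pow_pow (k + B) (k + 1)).eq, mul_assoc]

end ObeliskAux

open ObeliskAux

/-- A `p`-obelisk is a finite non-abelian `p`-group `O` with `|O : γ₂(O)| = p²` and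
`O^p = γ₃(O)`. -/
def IsPObelisk (p : ℕ) (O : Type*) [Group O] [Fintype O] : Prop :=
  IsPGroup p O ∧ (⊤ : Subgroup O).lowerCentralSeries 1 ≠ ⊥ ∧ ((⊤ : Subgroup O).lowerCentralSeries 1).index = p ^ 2 ∧
    Subgroup.closure ((· ^ p) '' (Set.univ : Set O)) = (⊤ : Subgroup O).lowerCentralSeries 2

/-- If `O` is a `p`-obelisk (`p > 3`), then `γ_i(O)^p = γ_{i+2}(O)` for every `i ≥ 1`. -/
theorem obelisk_lcs_pow (p : ℕ) [Fact p.Prime] (hp : 3 < p)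
    (O : Type*) [Group O] [Fintype O] (hO : IsPObelisk p O) :
    ∀ i : ℕ, 1 ≤ i →
      Subgroup.closure ((· ^ p) '' ((⊤ : Subgroup O).lowerCentralSeries (i - 1) : Set O))
        = (⊤ : Subgroup O).lowerCentralSeries (i + 1) := by
  obtain ⟨hpg, -, -, hS0⟩ := hO
  have hprime : p.Prime := Fact.out
  obtain ⟨m₂, hm₂⟩ : ∃ m, p.choose 2 = m * p := by
    obtain ⟨m, hm⟩ := (Nat.Prime.dvd_choose_self hprime two_ne_zero (by omega) : p ∣ p.choose 2)
    exact ⟨m, by rw [hm, Nat.mul_comm]⟩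
  obtain ⟨m₃, hm₃⟩ : ∃ m, p.choose 3 = m * p := by
    obtain ⟨m, hm⟩ := (Nat.Prime.dvd_choose_self hprime three_ne_zero (by omega) : p ∣ p.choose 3)
    exact ⟨m, by rw [hm, Nat.mul_comm]⟩
  have main : ∀ j : ℕ,
      Subgroup.closure ((· ^ p) '' (LCS O j : Set O))
        = LCS O (j + 2) := by
    intro j
    induction j with
    | zero => simpa using hS0
    | succ j ih =>
      show Subgroup.closure ((· ^ p) '' (LCS O (j + 1) : Set O))
          = LCS O (j + 3)
      -- Part (A) : p-th powers of γ_{j+2} lie in γ_{j+4}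
      have hbot : LCS (O ⧸ LCS O (j + 3)) (j + 3) = ⊥ :=
        lcs_quotient_eq_bot le_rfl
      have hA : ∀ y ∈ LCS O (j + 1), y ^ p ∈ LCS O (j + 3) := by
        have hR : ∀ z ∈ LCS (O ⧸ LCS O (j + 3)) (j + 2),
            z ^ p = 1 := by
          apply pow_eq_one_of_commutator_gen (lcs_succ' (j + 1)).symm
          · intro y1 h1 z1 h2
            exact commute_of_lcs_bot h1 h2 (by omega) hbot
          · intro a ha g
            have hc : ⁅a, g⁆ ∈ LCS (O ⧸ LCS O (j + 3)) (j + 2) :=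
              commutator_mem_lcs_succ_left ha g
            have hd1 : ⁅a, ⁅a, g⁆⁆ = 1 :=
              Subgroup.mem_bot.mp (hbot ▸ commutator_mem_lcs_succ_right hc a)
            have he1 : ⁅a, ⁅a, ⁅a, g⁆⁆⁆ = 1 := by
              rw [hd1, commutatorElement_one_right]
            have heq := hp3 a g
              (by rw [hd1]; exact Commute.one_right _)
              (by rw [he1]; exact Commute.one_right _)
              (by rw [he1]; exact Commute.one_right _)
              (by rw [he1]; exact Commute.one_right _) p
            obtain ⟨a₀, ha₀, rfl⟩ := exists_lift_of_mem_lcs ha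
            have hap : a₀ ^ p ∈ LCS O (j + 2) := by
              rw [← ih]
              exact Subgroup.subset_closure
                ⟨a₀, Subgroup.lowerCentralSeries_antitone ⊤ (Nat.le_succ j) ha₀, rfl⟩
            have h5 : ⁅(QuotientGroup.mk' (LCS O (j + 3))) a₀ ^ p, g⁆ = 1 := by
              have h6 : ((QuotientGroup.mk' (LCS O (j + 3))) a₀) ^ p
                  ∈ LCS (O ⧸ LCS O (j + 3)) (j + 2) := by
                rw [← map_pow]
                exact mem_lcs_map _ hap
              exact Subgroup.mem_bot.mp (hbot ▸ commutator_mem_lcs_succ_left h6 g)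
            rw [h5, he1] at heq
            rw [hd1] at heq
            rw [one_pow, one_pow, mul_one, mul_one] at heq
            exact heq.symm
        have hclaim : ∀ z ∈ LCS (O ⧸ LCS O (j + 3)) (j + 1),
            z ^ p = 1 := by
          apply pow_eq_one_of_commutator_gen (lcs_succ' j).symm
          · intro y1 h1 z1 h2
            exact commute_of_lcs_bot h1 h2 (by omega) hbot
          · intro a ha g
            have hc : ⁅a, g⁆ ∈ LCS (O ⧸ LCS O (j + 3)) (j + 1) :=
              commutator_mem_lcs_succ_left ha g
            have hdm : ⁅a, ⁅a, g⁆⁆ ∈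
                LCS (O ⧸ LCS O (j + 3)) (j + 2) :=
              commutator_mem_lcs_succ_right hc a
            have he1 : ⁅a, ⁅a, ⁅a, g⁆⁆⁆ = 1 :=
              Subgroup.mem_bot.mp (hbot ▸ commutator_mem_lcs_succ_right hdm a)
            have heq := hp3 a g
              (commute_of_lcs_bot hc hdm (by omega) hbot)
              (by rw [he1]; exact Commute.one_right _)
              (by rw [he1]; exact Commute.one_right _)
              (by rw [he1]; exact Commute.one_right _) p
            obtain ⟨a₀, ha₀, rfl⟩ := exists_lift_of_mem_lcs ha
            have hap : a₀ ^ p ∈ LCS O (j + 2) := by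
              rw [← ih]
              exact Subgroup.subset_closure ⟨a₀, ha₀, rfl⟩
            have h5 : ⁅(QuotientGroup.mk' (LCS O (j + 3))) a₀ ^ p, g⁆ = 1 := by
              have h6 : ((QuotientGroup.mk' (LCS O (j + 3))) a₀) ^ p
                  ∈ LCS (O ⧸ LCS O (j + 3)) (j + 2) := by
                rw [← map_pow]
                exact mem_lcs_map _ hap
              exact Subgroup.mem_bot.mp (hbot ▸ commutator_mem_lcs_succ_left h6 g)
            rw [h5, he1, one_pow, mul_one] at heq
            have hd2 : (⁅(QuotientGroup.mk' (LCS O (j + 3))) a₀,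
                ⁅(QuotientGroup.mk' (LCS O (j + 3))) a₀, g⁆⁆ ^ m₂) ^ p = 1 :=
              hR _ (Subgroup.pow_mem _ hdm m₂)
            rw [hm₂, pow_mul, hd2, mul_one] at heq
            exact heq.symm
        intro y hy
        have h2 : (QuotientGroup.mk' (LCS O (j + 3))) (y ^ p) = 1 := by
          rw [map_pow]
          exact hclaim _ (mem_lcs_map _ hy)
        have h3 := MonoidHom.mem_ker.mpr h2
        rwa [QuotientGroup.ker_mk'] at h3
      -- normality of the p-power closure
      have hSnormal : (Subgroup.closure
          ((· ^ p) '' (LCS O (j + 1) : Set O))).Normal := by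
        apply closure_conj_invariant_normal
        rintro g _ ⟨x, hx, rfl⟩
        exact ⟨g * x * g⁻¹, (Subgroup.lowerCentralSeries_normal ⊤ (j + 1)).conj_mem x hx g,
          (conj_pow_eq g x p).symm⟩
      haveI := hSnormal
      -- Part (B)
      have hB : LCS O (j + 3) ≤
          Subgroup.closure ((· ^ p) '' (LCS O (j + 1) : Set O))
            ⊔ LCS O (j + 4) := by
        have h1 : LCS O (j + 3)
            = ⁅Subgroup.closure ((· ^ p) '' (LCS O j : Set O)),
                (⊤ : Subgroup O)⁆ := by
          have h0 : LCS O (j + 3) = ⁅LCS O (j + 2), ⊤⁆ := rfl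
          rw [h0, ← ih]
        rw [h1]
        apply commutator_closure_top_le
        rintro _ ⟨x, hx, rfl⟩ g
        have hbot4 : LCS (O ⧸ LCS O (j + 4)) (j + 4) = ⊥ :=
          lcs_quotient_eq_bot le_rfl
        have hXj : (QuotientGroup.mk' (LCS O (j + 4))) x
            ∈ LCS (O ⧸ LCS O (j + 4)) j := mem_lcs_map _ hx
        have hc := commutator_mem_lcs_succ_left hXj
          ((QuotientGroup.mk' (LCS O (j + 4))) g)
        have hdm := commutator_mem_lcs_succ_right hc
          ((QuotientGroup.mk' (LCS O (j + 4))) x)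
        have hem := commutator_mem_lcs_succ_right hdm
          ((QuotientGroup.mk' (LCS O (j + 4))) x)
        have heq := hp3 ((QuotientGroup.mk' (LCS O (j + 4))) x)
          ((QuotientGroup.mk' (LCS O (j + 4))) g)
          (commute_of_lcs_bot hc hdm (by omega) hbot4)
          (commute_of_lcs_bot hc hem (by omega) hbot4)
          (commute_of_lcs_bot hdm hem (by omega) hbot4)
          (commute_of_lcs_bot hXj hem (by omega) hbot4) p
        have hd2 : ⁅(QuotientGroup.mk' (LCS O (j + 4))) x,
            ⁅(QuotientGroup.mk' (LCS O (j + 4))) x,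
              (QuotientGroup.mk' (LCS O (j + 4))) g⁆⁆ ^ m₂
            ∈ LCS (O ⧸ LCS O (j + 4)) (j + 1) :=
          Subgroup.lowerCentralSeries_antitone ⊤ (by omega) (Subgroup.pow_mem _ hdm m₂)
        have he3 : ⁅(QuotientGroup.mk' (LCS O (j + 4))) x,
            ⁅(QuotientGroup.mk' (LCS O (j + 4))) x,
              ⁅(QuotientGroup.mk' (LCS O (j + 4))) x,
                (QuotientGroup.mk' (LCS O (j + 4))) g⁆⁆⁆ ^ m₃
            ∈ LCS (O ⧸ LCS O (j + 4)) (j + 1) :=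
          Subgroup.lowerCentralSeries_antitone ⊤ (by omega) (Subgroup.pow_mem _ hem m₃)
        obtain ⟨u, hu, huπ⟩ := exists_lift_of_mem_lcs hc
        obtain ⟨v, hv, hvπ⟩ := exists_lift_of_mem_lcs hd2
        obtain ⟨w, hw, hwπ⟩ := exists_lift_of_mem_lcs he3
        have hπeq : (QuotientGroup.mk' (LCS O (j + 4))) ⁅x ^ p, g⁆
            = (QuotientGroup.mk' (LCS O (j + 4))) (u ^ p * v ^ p * w ^ p) := by
          rw [map_commutatorElement, map_pow, heq, map_mul, map_mul, map_pow, map_pow, map_pow,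
            huπ, hvπ, hwπ, ← pow_mul, ← pow_mul, ← hm₂, ← hm₃]
        have hker : (u ^ p * v ^ p * w ^ p)⁻¹ * ⁅x ^ p, g⁆
            ∈ LCS O (j + 4) := by
          have h7 : (QuotientGroup.mk' (LCS O (j + 4)))
              ((u ^ p * v ^ p * w ^ p)⁻¹ * ⁅x ^ p, g⁆) = 1 := by
            rw [map_mul, map_inv, hπeq]
            group
          have h8 := MonoidHom.mem_ker.mpr h7
          rwa [QuotientGroup.ker_mk'] at h8
        have hrepr : ⁅x ^ p, g⁆
            = (u ^ p * v ^ p * w ^ p) * ((u ^ p * v ^ p * w ^ p)⁻¹ * ⁅x ^ p, g⁆) := by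
          group
        rw [hrepr]
        have hSmem : u ^ p * v ^ p * w ^ p ∈ Subgroup.closure
            ((· ^ p) '' (LCS O (j + 1) : Set O)) :=
          Subgroup.mul_mem _ (Subgroup.mul_mem _ (Subgroup.subset_closure ⟨u, hu, rfl⟩)
            (Subgroup.subset_closure ⟨v, hv, rfl⟩)) (Subgroup.subset_closure ⟨w, hw, rfl⟩)
        exact Subgroup.mul_mem _ (Subgroup.mem_sup_left hSmem) (Subgroup.mem_sup_right hker)
      -- Frattini argument
      have hnil : Group.IsNilpotent
          (O ⧸ Subgroup.closure ((· ^ p) '' (LCS O (j + 1) : Set O))) :=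
        (hpg.to_quotient _).isNilpotent
      have hfr : LCS O (j + 3) ≤
          Subgroup.closure ((· ^ p) '' (LCS O (j + 1) : Set O)) := by
        apply frattini_lcs hnil
        rw [← lcs_succ' (j + 3)]
        exact hB
      apply le_antisymm
      · rw [Subgroup.closure_le]
        rintro _ ⟨y, hy, rfl⟩
        exact hA y hy
      · exact hfr
  intro i hi
  obtain ⟨k, rfl⟩ : ∃ k, i = k + 1 := ⟨i - 1, (Nat.succ_pred_eq_of_pos hi).symm⟩
  simpa using main k
end
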